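/- arXiv:2106.06502 — 8 statements merged into one kernel-verified Lean document; each statement's English description precedes it below -/
import Mathlib

section
/- For all r in [0,1), all x in [0,1), all p in (0,1], and all positive integers m, the quantity Q(x) := 1 - ((r^m + x)/(1 + x·r^m))^p - p·((1 - r^m)/(1 + r^m))·(1 - x) is nonnegative. -/
theorem bohr_rogosinski_lemma_Q_nonneg
    (r x p : ℝ) (m : ℕ)
    (hr : r ∈ Set.Ico (0:ℝ) 1) (hx : x ∈ Set.Ico (0:ℝ) 1)
    (hp : p ∈ Set.Ioc (0:ℝ) 1) (hm : 0 < m) :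
    0 ≤ 1 - ((r ^ m + x) / (1 + x * r ^ m)) ^ p
        - p * ((1 - r ^ m) / (1 + r ^ m)) * (1 - x) := by
  obtain ⟨hr0, hr1⟩ := hr
  obtain ⟨hx0, hx1⟩ := hx
  obtain ⟨hp0, hp1⟩ := hp
  set t : ℝ := r ^ m with ht
  have ht0 : 0 ≤ t := pow_nonneg hr0 m
  have ht1 : t < 1 := pow_lt_one₀ hr0 hr1 hm.ne'
  have hd : 0 < 1 + x * t := by nlinarith
  set y : ℝ := (t + x) / (1 + x * t) with hy
  have hy0 : 0 ≤ y := div_nonneg (by linarith) hd.le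
  have hbern : y ^ p ≤ 1 + p * (y - 1) := by
    have := rpow_one_add_le_one_add_mul_self (s := y - 1) (by linarith) hp0.le hp1
    simpa using this
  have h1y : 1 - y = ((1 - t) * (1 - x)) / (1 + x * t) := by
    rw [hy]; field_simp; ring
  have hkey : (1 - t) / (1 + t) * (1 - x) ≤ 1 - y := by
    rw [h1y, div_mul_eq_mul_div]
    apply div_le_div_of_nonneg_left (by nlinarith) hd (by nlinarith)
    |>.trans_eq rfl
  nlinarith [hkey, hbern, hp0]
end

section
/- The function x ↦ 1 - ((r^m + x)/(1 + x·r^m))^p - p·((1 - r^m)/(1 + r^m))·(1 - x) is monotonically decreasing on [0,1) for every fixed r in [0,1), p in (0,1], and positive integer m. -/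
theorem bohr_rogosinski_lemma_Q_antitone
    (r p : ℝ) (m : ℕ)
    (hr : r ∈ Set.Ico (0:ℝ) 1) (hp : p ∈ Set.Ioc (0:ℝ) 1) (hm : 0 < m) :
    AntitoneOn (fun x : ℝ =>
      1 - ((r ^ m + x) / (1 + x * r ^ m)) ^ p
        - p * ((1 - r ^ m) / (1 + r ^ m)) * (1 - x)) (Set.Ico (0:ℝ) 1) := by
  obtain ⟨hr0, hr1⟩ := hr
  obtain ⟨hp0, hp1⟩ := hp
  have ha0 : (0:ℝ) ≤ r ^ m := pow_nonneg hr0 m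
  have ha1 : r ^ m < 1 := pow_lt_one₀ hr0 hr1 (by omega)
  set a : ℝ := r ^ m with ha
  have key : ∀ x ∈ Set.Ico (0:ℝ) 1, (0:ℝ) < 1 + x * a := by
    intro x hx
    nlinarith [hx.1]
  have hder : ∀ x ∈ Set.Ioo (0:ℝ) 1, HasDerivAt (fun y : ℝ =>
      1 - ((a + y) / (1 + y * a)) ^ p - p * ((1 - a) / (1 + a)) * (1 - y))
      (0 - (1 - a ^ 2) / (1 + x * a) ^ 2 * p * ((a + x) / (1 + x * a)) ^ (p - 1)
        - p * ((1 - a) / (1 + a)) * (-1)) x := by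
    intro x hx
    obtain ⟨hx0, hx1⟩ := hx
    have hd : (0:ℝ) < 1 + x * a := key x ⟨hx0.le, hx1⟩
    have hg0 : (0:ℝ) < (a + x) / (1 + x * a) := div_pos (by linarith) hd
    have hc : HasDerivAt (fun y : ℝ => 1 + y * a) a x := by
      simpa using ((hasDerivAt_id x).mul_const a).const_add 1
    have hgd : HasDerivAt (fun y : ℝ => (a + y) / (1 + y * a))
        ((1 * (1 + x * a) - (a + x) * a) / (1 + x * a) ^ 2) x :=
      ((hasDerivAt_id x).const_add a).div hc hd.ne'
    have hgd' : HasDerivAt (fun y : ℝ => (a + y) / (1 + y * a))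
        ((1 - a ^ 2) / (1 + x * a) ^ 2) x := by
      convert hgd using 1; ring
    have hpd : HasDerivAt (fun y : ℝ => ((a + y) / (1 + y * a)) ^ p)
        ((1 - a ^ 2) / (1 + x * a) ^ 2 * p * ((a + x) / (1 + x * a)) ^ (p - 1)) x :=
      hgd'.rpow_const (Or.inl hg0.ne')
    have hlin : HasDerivAt (fun y : ℝ => p * ((1 - a) / (1 + a)) * (1 - y))
        (p * ((1 - a) / (1 + a)) * (-1)) x := by
      simpa using (((hasDerivAt_id x).const_sub 1).const_mul (p * ((1 - a) / (1 + a))))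
    exact ((hasDerivAt_const x (1:ℝ)).sub hpd).sub hlin
  apply antitoneOn_of_deriv_nonpos (convex_Ico 0 1)
  · refine ContinuousOn.sub (ContinuousOn.sub continuousOn_const ?_) (by fun_prop)
    exact ((continuousOn_const.add continuousOn_id).div
        (continuousOn_const.add (continuousOn_id.mul continuousOn_const))
        (fun x hx => (key x hx).ne')).rpow_const (fun x hx => Or.inr hp0.le)
  · intro x hx
    rw [interior_Ico] at hx
    exact (hder x hx).differentiableAt.differentiableWithinAt
  · intro x hx
    rw [interior_Ico] at hx
    rw [(hder x hx).deriv]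
    obtain ⟨hx0, hx1⟩ := hx
    have hd : (0:ℝ) < 1 + x * a := key x ⟨hx0.le, hx1⟩
    have hg0 : (0:ℝ) < (a + x) / (1 + x * a) := div_pos (by linarith) hd
    have hgle1 : (a + x) / (1 + x * a) ≤ 1 := by
      rw [div_le_one hd]; nlinarith
    have hrpow : (1:ℝ) ≤ ((a + x) / (1 + x * a)) ^ (p - 1) :=
      Real.one_le_rpow_of_pos_of_le_one_of_nonpos hg0 hgle1 (by linarith)
    have hgc : (1 - a) / (1 + a) ≤ (1 - a ^ 2) / (1 + x * a) ^ 2 := by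
      rw [div_le_div_iff₀ (by linarith) (by positivity)]
      have h1 : 1 + x * a ≤ 1 + a := by nlinarith
      have h2 : (1 + x * a) ^ 2 ≤ (1 + a) ^ 2 := by nlinarith
      nlinarith [mul_le_mul_of_nonneg_left h2 (by linarith : (0:ℝ) ≤ 1 - a)]
    have hgc0 : (0:ℝ) ≤ (1 - a ^ 2) / (1 + x * a) ^ 2 :=
      div_nonneg (by nlinarith) (by positivity)
    nlinarith [mul_le_mul_of_nonneg_left hrpow hgc0]
end

section
/- For all r in [0,1), all x in [0,1), all p in (0,2], and all positive integers m, the quantity P(x) := 1 - ((r^m + x)/(1 + x·r^m))^p - (p/2)·((1 - r^m)/(1 + r^m))·(1 - x^2) is nonnegative. -/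
theorem bohr_rogosinski_lemma_P_nonneg
    (r x p : ℝ) (m : ℕ)
    (hr : r ∈ Set.Ico (0:ℝ) 1) (hx : x ∈ Set.Ico (0:ℝ) 1)
    (hp : p ∈ Set.Ioc (0:ℝ) 2) (hm : 0 < m) :
    0 ≤ 1 - ((r ^ m + x) / (1 + x * r ^ m)) ^ p
        - (p / 2) * ((1 - r ^ m) / (1 + r ^ m)) * (1 - x ^ 2) := by
  obtain ⟨hr0, hr1⟩ := hr
  obtain ⟨hx0, hx1⟩ := hx
  obtain ⟨hp0, hp2⟩ := hp
  set t := r ^ m with htdef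
  have ht0 : 0 ≤ t := pow_nonneg hr0 m
  have ht1 : t < 1 := pow_lt_one₀ hr0 hr1 hm.ne'
  have hden : 0 < 1 + x * t := by nlinarith
  set u := (t + x) / (1 + x * t) with hudef
  have hu0 : 0 ≤ u := div_nonneg (by linarith) hden.le
  have hu1 : u ≤ 1 := by
    rw [hudef, div_le_one hden]; nlinarith
  -- Bernoulli-type inequality: u^p ≤ (1 - p/2) + (p/2) * u^2
  have key : u ^ p ≤ (1 - p / 2) + (p / 2) * u ^ 2 := by
    have h := Real.geom_mean_le_arith_mean2_weighted
      (w₁ := 1 - p / 2) (w₂ := p / 2) (p₁ := 1) (p₂ := u ^ 2)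
      (by linarith) (by linarith) zero_le_one (by positivity) (by ring)
    have h1 : (1 : ℝ) ^ (1 - p / 2) = 1 := Real.one_rpow _
    have h2 : (u ^ 2) ^ (p / 2) = u ^ p := by
      rw [show ((u : ℝ) ^ 2 : ℝ) = u ^ (2 : ℝ) by rw [Real.rpow_two],
        ← Real.rpow_mul hu0]
      congr 1; ring
    rw [h1, h2, one_mul] at h
    linarith [h]
  have hu2 : 1 - u ^ 2 = (1 - t ^ 2) * (1 - x ^ 2) / (1 + x * t) ^ 2 := by
    rw [hudef]; field_simp; ring
  -- (1 - u^2) ≥ ((1-t)/(1+t)) * (1-x^2)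
  have hstep : ((1 - t) / (1 + t)) * (1 - x ^ 2) ≤ 1 - u ^ 2 := by
    rw [hu2, div_mul_eq_mul_div, div_le_div_iff₀ (by linarith) (by positivity)]
    have h5 : 0 ≤ ((1-t)*(1-x^2))*((2+t+x*t)*(t*(1-x))) :=
      mul_nonneg (mul_nonneg (by linarith) (by nlinarith))
        (mul_nonneg (by nlinarith) (mul_nonneg ht0 (by linarith)))
    nlinarith [h5]
  nlinarith [key, hstep, mul_le_mul_of_nonneg_left hstep (by linarith : (0:ℝ) ≤ p / 2)]
end

section
/- The function x ↦ 1 - ((r^m + x)/(1 + x·r^m))^p - (p/2)·((1 - r^m)/(1 + r^m))·(1 - x^2) is monotonically decreasing on [0,1) for every fixed r ∈ [0,1), p ∈ (0,2], and positive integer m, and its limit as x → 1⁻ is 0. -/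
theorem bohr_rogosinski_lemma_P_antitone_and_limit
    (r p : ℝ) (m : ℕ)
    (hr : r ∈ Set.Ico (0:ℝ) 1) (hp : p ∈ Set.Ioc (0:ℝ) 2) (hm : 0 < m) :
    AntitoneOn (fun x : ℝ =>
      1 - ((r ^ m + x) / (1 + x * r ^ m)) ^ p
        - (p / 2) * ((1 - r ^ m) / (1 + r ^ m)) * (1 - x ^ 2)) (Set.Ico (0:ℝ) 1)
    ∧ Filter.Tendsto (fun x : ℝ =>
      1 - ((r ^ m + x) / (1 + x * r ^ m)) ^ p
        - (p / 2) * ((1 - r ^ m) / (1 + r ^ m)) * (1 - x ^ 2))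
      (nhdsWithin 1 (Set.Iio 1)) (nhds 0) := by
  obtain ⟨hr0, hr1⟩ := hr
  obtain ⟨hp0, hp2⟩ := hp
  set s : ℝ := r ^ m with hs
  have hs0 : 0 ≤ s := pow_nonneg hr0 m
  have hs1 : s < 1 := pow_lt_one₀ hr0 hr1 hm.ne'
  have hden : ∀ x : ℝ, 0 ≤ x → (0:ℝ) < 1 + x * s := by
    intro x hx
    nlinarith
  -- derivative fact
  have hderiv : ∀ x ∈ Set.Ioo (0:ℝ) 1,
      HasDerivAt (fun x : ℝ =>
        1 - ((s + x) / (1 + x * s)) ^ p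
          - (p / 2) * ((1 - s) / (1 + s)) * (1 - x ^ 2))
        (-((1 * (1 + x * s) - (s + x) * s) / (1 + x * s) ^ 2 * p *
            ((s + x) / (1 + x * s)) ^ (p - 1))
          - (p / 2) * ((1 - s) / (1 + s)) * (-(2 * x))) x := by
    intro x hx
    have hdx : (0:ℝ) < 1 + x * s := hden x hx.1.le
    have h1 : HasDerivAt (fun x : ℝ => s + x) 1 x := (hasDerivAt_id x).const_add s
    have h2 : HasDerivAt (fun x : ℝ => 1 + x * s) s x := by
      simpa using ((hasDerivAt_id x).mul_const s).const_add 1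
    have ht : HasDerivAt (fun x : ℝ => (s + x) / (1 + x * s))
        ((1 * (1 + x * s) - (s + x) * s) / (1 + x * s) ^ 2) x := h1.div h2 hdx.ne'
    have htpos : 0 < (s + x) / (1 + x * s) := div_pos (by linarith [hx.1]) hdx
    have hrp := ht.rpow_const (p := p) (Or.inl htpos.ne')
    have hq : HasDerivAt (fun x : ℝ => (p / 2) * ((1 - s) / (1 + s)) * (1 - x ^ 2))
        ((p / 2) * ((1 - s) / (1 + s)) * (-(2 * x))) x := by
      have : HasDerivAt (fun x : ℝ => 1 - x ^ 2) (-(2 * x)) x := by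
        simpa using (hasDerivAt_pow 2 x).const_sub 1
      exact this.const_mul _
    exact (hrp.const_sub 1).sub hq
  have hmain : ∀ x ∈ Set.Ioo (0:ℝ) 1,
      (-((1 * (1 + x * s) - (s + x) * s) / (1 + x * s) ^ 2 * p *
            ((s + x) / (1 + x * s)) ^ (p - 1))
          - (p / 2) * ((1 - s) / (1 + s)) * (-(2 * x))) ≤ 0 := by
    intro x hx
    obtain ⟨hx0, hx1⟩ := hx
    have hdx : (0:ℝ) < 1 + x * s := hden x hx0.le
    set t : ℝ := (s + x) / (1 + x * s) with hts
    have htpos : 0 < t := div_pos (by linarith) hdx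
    have ht1 : t ≤ 1 := by
      rw [div_le_one hdx]
      nlinarith
    -- t^(p-1) ≥ t since t ≤ 1 and p - 1 ≤ 1
    have hkey : t ≤ t ^ (p - 1) := by
      calc t = t ^ (1:ℝ) := (Real.rpow_one t).symm
        _ ≤ t ^ (p - 1) := Real.rpow_le_rpow_of_exponent_ge htpos ht1 (by linarith)
    have ht' : 0 < (1 - s * s) / (1 + x * s) ^ 2 := by
      apply div_pos (by nlinarith) (by positivity)
    have hnum : (1 * (1 + x * s) - (s + x) * s) = 1 - s * s := by ring
    rw [hnum]
    -- it suffices that t * ((1-s*s)/(1+x*s)^2) ≥ ((1-s)/(1+s)) * x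
    have hpoly : ((1 - s) / (1 + s)) * x ≤ t * ((1 - s * s) / (1 + x * s) ^ 2) := by
      rw [hts, div_mul_div_comm, div_mul_eq_mul_div, div_le_div_iff₀ (by positivity) (by positivity)]
      have hA : x * (1 + x * s) ^ 3 ≤ x * (1 + s) ^ 3 := by
        have h3 : (1 + x * s) ^ 3 ≤ (1 + s) ^ 3 :=
          pow_le_pow_left₀ hdx.le (by nlinarith) 3
        exact mul_le_mul_of_nonneg_left h3 hx0.le
      have hB : x * (1 + s) ^ 3 ≤ (s + x) * (1 + s) ^ 2 := by
        nlinarith [mul_nonneg (mul_nonneg hs0 (by linarith : (0:ℝ) ≤ 1 - x))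
          (sq_nonneg (1 + s))]
      have hC : 0 ≤ (1 - s) * ((s + x) * (1 + s) ^ 2 - x * (1 + x * s) ^ 3) :=
        mul_nonneg (by linarith) (by linarith)
      nlinarith [hC]
    have h2 : ((1 - s) / (1 + s)) * x ≤ t ^ (p - 1) * ((1 - s * s) / (1 + x * s) ^ 2) :=
      le_trans hpoly (mul_le_mul_of_nonneg_right hkey ht'.le)
    have := mul_le_mul_of_nonneg_left h2 hp0.le
    nlinarith [this]
  constructor
  · apply antitoneOn_of_deriv_nonpos (convex_Ico 0 1)
    · -- continuity
      have htc : ContinuousOn (fun x : ℝ => (s + x) / (1 + x * s)) (Set.Ico 0 1) := by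
        apply ContinuousOn.div
        · fun_prop
        · fun_prop
        · intro x hx; exact (hden x hx.1).ne'
      have h1 : ContinuousOn (fun x : ℝ => ((s + x) / (1 + x * s)) ^ p) (Set.Ico 0 1) :=
        htc.rpow_const (fun x _ => Or.inr hp0.le)
      exact ((continuousOn_const.sub h1).sub (by fun_prop))
    · rw [interior_Ico]
      intro x hx
      exact ((hderiv x hx).differentiableAt).differentiableWithinAt
    · rw [interior_Ico]
      intro x hx
      rw [(hderiv x hx).deriv]
      exact hmain x hx
  · have hca : ContinuousAt (fun x : ℝ =>
        1 - ((s + x) / (1 + x * s)) ^ p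
          - (p / 2) * ((1 - s) / (1 + s)) * (1 - x ^ 2)) 1 := by
      have hd1 : (0:ℝ) < 1 + 1 * s := by linarith
      have htc : ContinuousAt (fun x : ℝ => (s + x) / (1 + x * s)) 1 := by
        apply ContinuousAt.div
        · fun_prop
        · fun_prop
        · exact hd1.ne'
      have htpos : (0:ℝ) < (s + 1) / (1 + 1 * s) := div_pos (by linarith) hd1
      have h1 : ContinuousAt (fun x : ℝ => ((s + x) / (1 + x * s)) ^ p) 1 :=
        htc.rpow_const (Or.inl htpos.ne')
      exact (continuousAt_const.sub h1).sub (by fun_prop)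
    have := hca.continuousWithinAt (s := Set.Iio 1)
    have hval : (1 : ℝ) - ((s + 1) / (1 + 1 * s)) ^ p
        - (p / 2) * ((1 - s) / (1 + s)) * (1 - 1 ^ 2) = 0 := by
      have : (s + 1) / (1 + 1 * s) = 1 := by
        rw [div_eq_one_iff_eq (by linarith)]; ring
      rw [this, Real.one_rpow]; ring
    have h1 : (s + 1) / (1 + s) = 1 := by
      rw [div_eq_one_iff_eq (by linarith)]; ring
    rw [ContinuousWithinAt] at this
    simpa [h1, Real.one_rpow] using this
end

section
/- Let f(z) = Σ a_n z^n be analytic on 𝔻 with |f| ≤ 1, let p ∈ (0,1], N and m positive integers. If r ∈ [0,1) satisfies 2 r^N (1 + r^m) ≤ p (1 - r)(1 - r^m), then for all |z| = r: |f(z^m)|^p + Σ_{n≥N} |a_n| r^n ≤ 1. -/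
open Metric Complex ENNReal
lemma memBall_iff_abs {z : ℂ} : z ∈ ball (0:ℂ) 1 ↔ ‖z‖ < 1 := by
  simp [Metric.mem_ball, Complex.dist_eq]

lemma hasFPowerSeries_of_hasSum (b : ℕ → ℂ) (F : ℂ → ℂ)
    (h : ∀ z ∈ ball (0:ℂ) 1, HasSum (fun k => b k * z ^ k) (F z)) :
    HasFPowerSeriesOnBall F (FormalMultilinearSeries.ofScalars ℂ b) 0 1 := by
  constructor
  · refine ENNReal.le_of_forall_nnreal_lt (fun ρ hρ => ?_)
    have hρ1 : (ρ : ℝ) < 1 := by exact_mod_cast hρ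
    have hz : ((ρ : ℝ) : ℂ) ∈ ball (0:ℂ) 1 := by
      rw [memBall_iff_abs, Complex.norm_real, Real.norm_eq_abs, _root_.abs_of_nonneg ρ.coe_nonneg]
      exact hρ1
    have hs := (h _ hz).summable
    have ht := hs.tendsto_atTop_zero.norm
    have hbdd : BddAbove (Set.range fun k => ‖b k * ((ρ : ℝ) : ℂ) ^ k‖) := by
      simpa using ht.bddAbove_range
    obtain ⟨C, hC⟩ := hbdd
    refine FormalMultilinearSeries.le_radius_of_bound _ C (fun n => ?_)
    rw [FormalMultilinearSeries.ofScalars_norm]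
    have := hC ⟨n, rfl⟩
    simpa [norm_mul, norm_pow, Complex.norm_real, _root_.abs_of_nonneg ρ.coe_nonneg] using this
  · exact one_pos
  · intro y hy
    have hy' : y ∈ ball (0:ℂ) 1 := by
      rw [memBall_iff_abs]
      rw [EMetric.mem_ball, edist_zero_right] at hy
      have h2 : (‖y‖₊ : ENNReal) < ((1:NNReal) : ENNReal) := hy
      rw [ENNReal.coe_lt_coe] at h2
      have : ‖y‖ < 1 := by exact_mod_cast h2
      simpa using this
    rw [zero_add]
    have heq : (fun n => (FormalMultilinearSeries.ofScalars ℂ b n) fun _ => y)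
        = fun k => b k * y ^ k := by
      funext n; rw [FormalMultilinearSeries.ofScalars_apply_eq]; simp
    rw [heq]
    exact h y hy'

lemma diffOn_of_hasSum (b : ℕ → ℂ) (F : ℂ → ℂ)
    (h : ∀ z ∈ ball (0:ℂ) 1, HasSum (fun k => b k * z ^ k) (F z)) :
    DifferentiableOn ℂ F (ball (0:ℂ) 1) := by
  have := (hasFPowerSeries_of_hasSum b F h).analyticOnNhd.differentiableOn
  rwa [show Metric.eball (0:ℂ) 1 = ball (0:ℂ) 1 by
    rw [show ((1:ENNReal)) = ((1:NNReal):ENNReal) from rfl, Metric.emetric_ball_nnreal]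
    norm_num] at this

lemma deriv_eq_of_hasSum (b : ℕ → ℂ) (F : ℂ → ℂ)
    (h : ∀ z ∈ ball (0:ℂ) 1, HasSum (fun k => b k * z ^ k) (F z)) :
    deriv F 0 = b 1 := by
  have := (hasFPowerSeries_of_hasSum b F h).hasFPowerSeriesAt.deriv
  rw [this]
  show FormalMultilinearSeries.ofScalars ℂ b 1 (fun _ => 1) = b 1
  rw [FormalMultilinearSeries.ofScalars_apply_eq]; simp

-- Schwarz lemma with closed bound
lemma schwarz_le (v : ℂ → ℂ) (hd : DifferentiableOn ℂ v (ball (0:ℂ) 1)) (h0 : v 0 = 0)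
    (hv : ∀ z ∈ ball (0:ℂ) 1, ‖v z‖ ≤ 1) :
    (∀ z ∈ ball (0:ℂ) 1, ‖v z‖ ≤ ‖z‖) ∧ ‖deriv v 0‖ ≤ 1 := by
  have key : ∀ ε : ℝ, 0 < ε → Set.MapsTo v (ball (0:ℂ) 1) (closedBall (v 0) (1 + ε)) := by
    intro ε hε z hz
    rw [mem_closedBall, h0, Complex.dist_eq, sub_zero]
    exact le_trans (hv z hz) (by linarith)
  constructor
  · intro z hz
    have h1 : ∀ ε : ℝ, 0 < ε → ‖v z‖ ≤ ‖z‖ + ε := by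
      intro ε hε
      have := Complex.dist_le_div_mul_dist_of_mapsTo_ball hd (key ε hε) hz
      rw [h0, Complex.dist_eq, Complex.dist_eq, sub_zero, sub_zero, div_one] at this
      have hz1 : ‖z‖ < 1 := memBall_iff_abs.1 hz
      nlinarith [norm_nonneg z, hε]
    exact le_of_forall_pos_le_add h1
  · have h1 : ∀ ε : ℝ, 0 < ε → ‖deriv v 0‖ ≤ 1 + ε := by
      intro ε hε
      have := Complex.norm_deriv_le_div_of_mapsTo_ball hd (key ε hε) one_pos
      simpa using this
    exact le_of_forall_pos_le_add h1

-- |w - ω| ≤ |1 - conj ω * w| for points in closed disk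
lemma key1 (ω w : ℂ) (hω : ‖ω‖ ≤ 1) (hw : ‖w‖ ≤ 1) :
    ‖w - ω‖ ≤ ‖1 - (starRingEnd ℂ) ω * w‖ := by
  have hω2 : ω.re ^ 2 + ω.im ^ 2 ≤ 1 := by
    have := Complex.sq_norm ω
    nlinarith [Complex.sq_norm ω, Complex.normSq_apply ω, norm_nonneg ω]
  have hw2 : w.re ^ 2 + w.im ^ 2 ≤ 1 := by
    nlinarith [Complex.sq_norm w, Complex.normSq_apply w, norm_nonneg w]
  have h1 : Complex.normSq (w - ω) ≤ Complex.normSq (1 - (starRingEnd ℂ) ω * w) := by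
    simp only [Complex.normSq_apply, Complex.sub_re, Complex.sub_im, Complex.mul_re,
      Complex.mul_im, Complex.one_re, Complex.one_im, Complex.conj_re, Complex.conj_im]
    nlinarith [mul_nonneg (sub_nonneg.2 hω2) (sub_nonneg.2 hw2)]
  rw [Complex.norm_def, Complex.norm_def]
  exact Real.sqrt_le_sqrt h1

lemma const_of_abs_eq_one (u : ℂ → ℂ) (hd : DifferentiableOn ℂ u (ball (0:ℂ) 1))
    (hub : ∀ z ∈ ball (0:ℂ) 1, ‖u z‖ ≤ 1) (h1 : ‖u 0‖ = 1) :
    Set.EqOn u (Function.const ℂ (u 0)) (ball (0:ℂ) 1) := by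
  refine Complex.eqOn_of_isPreconnected_of_isMaxOn_norm (convex_ball _ _).isPreconnected
    isOpen_ball hd (mem_ball_self one_pos) ?_
  intro z hz
  show ‖u z‖ ≤ ‖u 0‖
  rw [h1]
  exact hub z hz

lemma key2 (ω t : ℂ) (s : ℝ) (ha1 : ‖ω‖ ≤ 1) (hts : ‖t‖ ≤ s)
    (hs1 : s ≤ 1) :
    ‖ω + t‖ * (1 + ‖ω‖ * s)
      ≤ (‖ω‖ + s) * ‖1 + (starRingEnd ℂ) ω * t‖ := by
  set a := ‖ω‖ with hadef
  set T := ‖t‖ with hTdef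
  have hT0 : 0 ≤ T := norm_nonneg t
  have hs0 : 0 ≤ s := hT0.trans hts
  have ha0 : 0 ≤ a := norm_nonneg ω
  have hX : ((starRingEnd ℂ) ω * t).re ≤ a * T := by
    calc ((starRingEnd ℂ) ω * t).re ≤ ‖(starRingEnd ℂ) ω * t‖ := Complex.re_le_norm _
    _ = a * T := by rw [norm_mul, Complex.norm_conj]
  have hXdef : ((starRingEnd ℂ) ω * t).re = ω.re * t.re + ω.im * t.im := by
    simp [Complex.mul_re, Complex.conj_re, Complex.conj_im]
  have ha2 : ω.re ^ 2 + ω.im ^ 2 = a ^ 2 := by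
    rw [hadef, Complex.sq_norm, Complex.normSq_apply]; ring
  have hT2 : t.re ^ 2 + t.im ^ 2 = T ^ 2 := by
    rw [hTdef, Complex.sq_norm, Complex.normSq_apply]; ring
  apply le_of_pow_le_pow_left₀ two_ne_zero (by positivity)
  rw [mul_pow, mul_pow, Complex.sq_norm, Complex.sq_norm]
  simp only [Complex.normSq_apply, Complex.add_re, Complex.add_im, Complex.one_re,
    Complex.one_im]
  rw [hXdef] at hX
  have hG : 0 ≤ (a + s) * (1 + a * T) + (1 + a * s) * (a + T) := by positivity
  have h2 : 0 ≤ (s - T) * (1 - a ^ 2) * ((a + s) * (1 + a * T) + (1 + a * s) * (a + T)) := by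
    apply mul_nonneg (mul_nonneg (by linarith) (by nlinarith)) hG
  have h1 : 0 ≤ (a * T - (ω.re * t.re + ω.im * t.im)) * (1 - a ^ 2) * (1 - s ^ 2) := by
    apply mul_nonneg (mul_nonneg (by linarith) (by nlinarith)) (by nlinarith)
  have hmul : ((starRingEnd ℂ) ω * t).re ^ 2 + ((starRingEnd ℂ) ω * t).im ^ 2
      = a ^ 2 * T ^ 2 := by
    have : ‖(starRingEnd ℂ) ω * t‖ = a * T := by rw [norm_mul, Complex.norm_conj]
    calc ((starRingEnd ℂ) ω * t).re ^ 2 + ((starRingEnd ℂ) ω * t).im ^ 2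
        = Complex.normSq ((starRingEnd ℂ) ω * t) := by rw [Complex.normSq_apply]; ring
      _ = ‖(starRingEnd ℂ) ω * t‖ ^ 2 := (Complex.sq_norm _).symm
      _ = a ^ 2 * T ^ 2 := by rw [this]; ring
  simp only [Complex.mul_re, Complex.mul_im, Complex.conj_re, Complex.conj_im] at hmul ⊢
  nlinarith [h1, h2, hX, ha2, hT2, hmul]

lemma schwarz_pick (u : ℂ → ℂ) (hd : DifferentiableOn ℂ u (ball (0:ℂ) 1))
    (hub : ∀ z ∈ ball (0:ℂ) 1, ‖u z‖ ≤ 1) :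
    ‖deriv u 0‖ ≤ 1 - ‖u 0‖ ^ 2 ∧
    ∀ w ∈ ball (0:ℂ) 1, ‖u w‖ * (1 + ‖u 0‖ * ‖w‖)
        ≤ ‖u 0‖ + ‖w‖ := by
  have h0mem : (0:ℂ) ∈ ball (0:ℂ) 1 := mem_ball_self one_pos
  have ha1 : ‖u 0‖ ≤ 1 := hub 0 h0mem
  rcases eq_or_lt_of_le ha1 with heq | hlt
  · -- |u 0| = 1 : u is constant
    have hconst := const_of_abs_eq_one u hd hub heq
    constructor
    · have hev : u =ᶠ[nhds (0:ℂ)] Function.const ℂ (u 0) :=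
        hconst.eventuallyEq_of_mem (isOpen_ball.mem_nhds h0mem)
      have hdc : deriv (Function.const ℂ (u 0)) 0 = 0 := deriv_const _ _
      rw [hev.deriv_eq, hdc]
      simp [heq]
    · intro w hw
      have : u w = u 0 := hconst hw
      rw [this, heq]
      have := norm_nonneg w
      nlinarith
  · -- |u 0| < 1
    set ω := u 0 with hω
    set c := (starRingEnd ℂ) ω with hc
    have hden : ∀ z ∈ ball (0:ℂ) 1, (1:ℂ) - c * u z ≠ 0 := by
      intro z hz h
      rw [sub_eq_zero] at h
      have : ‖(1:ℂ)‖ = ‖c * u z‖ := by rw [h]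
      rw [norm_one, norm_mul, hc, Complex.norm_conj] at this
      have h2 : ‖ω‖ * ‖u z‖ ≤ ‖ω‖ * 1 :=
        mul_le_mul_of_nonneg_left (hub z hz) (norm_nonneg ω)
      rw [mul_one] at h2
      linarith
    set v : ℂ → ℂ := fun z => (u z - ω) * ((1:ℂ) - c * u z)⁻¹ with hv
    have hdiff : DifferentiableOn ℂ v (ball (0:ℂ) 1) := by
      apply DifferentiableOn.mul (hd.sub (differentiableOn_const _))
      exact DifferentiableOn.inv ((differentiableOn_const _).sub
        ((differentiableOn_const c).mul hd)) hden
    have hv0 : v 0 = 0 := by simp [hv, hω]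
    have hvb : ∀ z ∈ ball (0:ℂ) 1, ‖v z‖ ≤ 1 := by
      intro z hz
      rw [hv]
      simp only
      rw [norm_mul, norm_inv]
      have hpos : 0 < ‖(1:ℂ) - c * u z‖ :=
        norm_pos_iff.mpr (hden z hz)
      rw [mul_inv_le_iff₀ hpos, one_mul]
      exact key1 ω (u z) ha1 (hub z hz)
    obtain ⟨hvz, hvd⟩ := schwarz_le v hdiff hv0 hvb
    constructor
    · -- derivative bound
      have hu0 : DifferentiableAt ℂ u 0 := hd.differentiableAt (isOpen_ball.mem_nhds h0mem)
      have hu' : HasDerivAt u (deriv u 0) 0 := hu0.hasDerivAt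
      have hA : HasDerivAt (fun z => u z - ω) (deriv u 0) 0 := hu'.sub_const _
      have hB : HasDerivAt (fun z => (1:ℂ) - c * u z) (-(c * deriv u 0)) 0 :=
        (hu'.const_mul c).const_sub 1
      have hBinv : HasDerivAt (fun z => ((1:ℂ) - c * u z)⁻¹)
          (-(-(c * deriv u 0)) / ((1:ℂ) - c * u 0) ^ 2) 0 := hB.inv (hden 0 h0mem)
      have hV : HasDerivAt v
          (deriv u 0 * ((1:ℂ) - c * u 0)⁻¹
            + (u 0 - ω) * (-(-(c * deriv u 0)) / ((1:ℂ) - c * u 0) ^ 2)) 0 := hA.mul hBinv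
      have hVsimp : deriv v 0 = deriv u 0 * ((1:ℂ) - c * u 0)⁻¹ := by
        rw [hV.deriv, ← hω, sub_self, zero_mul, add_zero]
      have hcω : c * ω = (Complex.normSq ω : ℂ) := by
        rw [hc, mul_comm, Complex.mul_conj]
      have habs1 : ‖(1:ℂ) - c * ω‖ = 1 - ‖ω‖ ^ 2 := by
        rw [hcω, ← Complex.sq_norm]
        have : (1:ℂ) - ((‖ω‖ ^ 2 : ℝ) : ℂ) = (((1 - ‖ω‖ ^ 2 : ℝ)) : ℂ) := by
          push_cast; ring
        rw [this, Complex.norm_real, Real.norm_eq_abs, _root_.abs_of_nonneg (by nlinarith [norm_nonneg ω, hlt])]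
      rw [hVsimp, norm_mul, norm_inv, ← hω, habs1] at hvd
      have hpos : 0 < 1 - ‖ω‖ ^ 2 := by nlinarith [norm_nonneg ω]
      rw [mul_inv_le_iff₀ hpos, one_mul] at hvd
      exact hvd
    · -- value bound
      intro w hw
      have hw1 : ‖w‖ < 1 := memBall_iff_abs.1 hw
      obtain ⟨t, hts, h5⟩ : ∃ t : ℂ, ‖t‖ ≤ ‖w‖ ∧
          t * ((1:ℂ) - c * u w) = u w - ω := by
        refine ⟨v w, hvz w hw, ?_⟩
        rw [hv]
        simp only
        rw [mul_assoc, inv_mul_cancel₀ (hden w hw), mul_one]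
      have hident : u w * (1 + (starRingEnd ℂ) ω * t) = ω + t := by
        rw [← hc]; linear_combination -h5
      have hne : (1:ℂ) + (starRingEnd ℂ) ω * t ≠ 0 := by
        intro h
        have h6 : ‖(starRingEnd ℂ) ω * t‖ = 1 := by
          have : (starRingEnd ℂ) ω * t = -1 := by linear_combination h
          rw [this]; simp
        rw [norm_mul, Complex.norm_conj] at h6
        have : ‖ω‖ * ‖t‖ ≤ 1 * ‖w‖ :=
          mul_le_mul ha1 hts (norm_nonneg t) one_pos.le
        rw [one_mul] at this
        linarith
      have habs : ‖u w‖ * ‖1 + (starRingEnd ℂ) ω * t‖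
          = ‖ω + t‖ := by
        rw [← norm_mul, hident]
      have hk := key2 ω t (‖w‖) ha1 hts hw1.le
      have hpos : 0 < ‖1 + (starRingEnd ℂ) ω * t‖ := norm_pos_iff.mpr hne
      have hfin : ‖u w‖ * (1 + ‖ω‖ * ‖w‖) *
          ‖1 + (starRingEnd ℂ) ω * t‖ ≤
          (‖ω‖ + ‖w‖) * ‖1 + (starRingEnd ℂ) ω * t‖ := by
        rw [mul_right_comm, habs]
        exact hk
      exact le_of_mul_le_mul_right hfin hpos

lemma exists_root (w : ℂ) (hw : ‖w‖ < 1) (n : ℕ) (hn : 0 < n) :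
    ∃ z : ℂ, ‖z‖ < 1 ∧ z ^ n = w := by
  rcases eq_or_ne w 0 with rfl | hw0
  · exact ⟨0, by simp, by simp [zero_pow hn.ne']⟩
  · have hn0 : ((n:ℝ)) ≠ 0 := by exact_mod_cast hn.ne'
    refine ⟨Complex.exp (Complex.log w / n), ?_, ?_⟩
    · rw [Complex.norm_exp]
      have hre : (Complex.log w / n).re = Real.log (‖w‖) / n := by
        rw [Complex.div_re]
        simp [Complex.log_re, Complex.normSq_apply]
        field_simp
      rw [hre]
      have h1 : Real.log (‖w‖) < 0 :=
        Real.log_neg (norm_pos_iff.mpr hw0) hw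
      have h2 : Real.log (‖w‖) / n < 0 :=
        div_neg_of_neg_of_pos h1 (by exact_mod_cast hn)
      exact Real.exp_lt_one_iff.2 h2
    · rw [← Complex.exp_nat_mul]
      rw [mul_div_cancel₀ _ (by exact_mod_cast hn.ne' : ((n:ℂ)) ≠ 0)]
      exact Complex.exp_log hw0

lemma wiener (F : ℂ → ℂ) (b : ℕ → ℂ)
    (hs : ∀ z ∈ ball (0:ℂ) 1, HasSum (fun k => b k * z ^ k) (F z))
    (hub : ∀ z ∈ ball (0:ℂ) 1, ‖F z‖ ≤ 1)
    (n : ℕ) (hn : 0 < n) :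
    ‖b n‖ ≤ 1 - ‖b 0‖ ^ 2 := by
  have h0mem : (0:ℂ) ∈ ball (0:ℂ) 1 := mem_ball_self one_pos
  set ζ : ℂ := Complex.exp (2 * Real.pi * Complex.I / n) with hζdef
  have hζ : IsPrimitiveRoot ζ n := Complex.isPrimitiveRoot_exp n hn.ne'
  have hζn : ζ ^ n = 1 := hζ.pow_eq_one
  have hζabs : ‖ζ‖ = 1 := by
    have h1 : ‖ζ‖ ^ n = 1 := by rw [← norm_pow, hζn, norm_one]
    rcases (pow_eq_one_iff_cases).1 h1 with h | h | h
    · omega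
    · exact h
    · exfalso; exact absurd h.1 (by nlinarith [norm_nonneg ζ])
  -- roots of unity sum
  have hsumroot : ∀ k : ℕ, (∑ j ∈ Finset.range n, (ζ ^ j) ^ k)
      = if n ∣ k then (n : ℂ) else 0 := by
    intro k
    have hcomm : ∀ j, (ζ ^ j) ^ k = (ζ ^ k) ^ j := fun j => by
      rw [← pow_mul, ← pow_mul, mul_comm]
    simp only [hcomm]
    by_cases hdvd : n ∣ k
    · rw [if_pos hdvd]
      have : ζ ^ k = 1 := (hζ.pow_eq_one_iff_dvd k).2 hdvd
      simp [this]
    · rw [if_neg hdvd]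
      have hne1 : ζ ^ k ≠ 1 := fun h => hdvd ((hζ.pow_eq_one_iff_dvd k).1 h)
      rw [geom_sum_eq hne1]
      have : (ζ ^ k) ^ n = 1 := by rw [← pow_mul, mul_comm, pow_mul, hζn, one_pow]
      rw [this, sub_self, zero_div]
  -- symmetrized function
  set G : ℂ → ℂ := fun z => (n : ℂ)⁻¹ * ∑ j ∈ Finset.range n, F (ζ ^ j * z) with hGdef
  have hmem' : ∀ (j : ℕ) (z : ℂ), z ∈ ball (0:ℂ) 1 → ζ ^ j * z ∈ ball (0:ℂ) 1 := by
    intro j z hz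
    rw [memBall_iff_abs, norm_mul, norm_pow, hζabs, one_pow, one_mul]
    exact memBall_iff_abs.1 hz
  have step1 : ∀ z ∈ ball (0:ℂ) 1,
      HasSum (fun k => b (n * k) * (z ^ n) ^ k) (G z) := by
    intro z hz
    have h1 : HasSum (fun k => ∑ j ∈ Finset.range n, b k * (ζ ^ j * z) ^ k)
        (∑ j ∈ Finset.range n, F (ζ ^ j * z)) :=
      hasSum_sum fun j _ => hs _ (hmem' j z hz)
    have h2 := h1.mul_left ((n : ℂ)⁻¹)
    have heq : (fun k => (n : ℂ)⁻¹ * ∑ j ∈ Finset.range n, b k * (ζ ^ j * z) ^ k)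
        = fun k => if n ∣ k then b k * z ^ k else 0 := by
      funext k
      have : ∑ j ∈ Finset.range n, b k * (ζ ^ j * z) ^ k
          = (b k * z ^ k) * ∑ j ∈ Finset.range n, (ζ ^ j) ^ k := by
        rw [Finset.mul_sum]
        congr 1; funext j; ring
      rw [this, hsumroot k]
      by_cases hdvd : n ∣ k
      · rw [if_pos hdvd, if_pos hdvd, mul_comm, mul_assoc,
          mul_inv_cancel₀ (by exact_mod_cast hn.ne' : ((n:ℂ)) ≠ 0), mul_one]
      · rw [if_neg hdvd, if_neg hdvd, mul_zero, mul_zero]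
    rw [heq] at h2
    have h3 := (Function.Injective.hasSum_iff
      (f := fun k => if n ∣ k then b k * z ^ k else 0)
      (g := fun k : ℕ => n * k)
      (fun x y hxy => Nat.eq_of_mul_eq_mul_left hn hxy)
      (fun k hk => by
        have hnd : ¬ n ∣ k := by
          rintro ⟨c, hc⟩
          exact hk ⟨c, hc.symm⟩
        simp [hnd])).2 h2
    have h4 : (fun k => if n ∣ n * k then b (n * k) * z ^ (n * k) else 0)
        = fun k => b (n * k) * (z ^ n) ^ k := by
      funext k
      rw [if_pos (dvd_mul_right n k), ← pow_mul]
    rw [Function.comp_def] at h3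
    rw [← h4]
    exact h3
  -- bound on G
  have hGb : ∀ z ∈ ball (0:ℂ) 1, ‖G z‖ ≤ 1 := by
    intro z hz
    rw [hGdef]
    simp only
    rw [norm_mul, norm_inv]
    have h5 : ‖∑ j ∈ Finset.range n, F (ζ ^ j * z)‖ ≤ (n : ℝ) := by
      calc ‖∑ j ∈ Finset.range n, F (ζ ^ j * z)‖
          ≤ ∑ j ∈ Finset.range n, ‖F (ζ ^ j * z)‖ := by
            exact norm_sum_le _ _
        _ ≤ ∑ j ∈ Finset.range n, 1 := Finset.sum_le_sum fun j hj => hub _ (hmem' j z hz)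
        _ = (n : ℝ) := by simp
    have hnabs : ‖(n : ℂ)‖ = (n : ℝ) := by
      rw [Complex.norm_natCast]
    rw [hnabs]
    rw [inv_mul_le_iff₀ (by exact_mod_cast hn), mul_one]
    exact h5
  -- the function H
  set H : ℂ → ℂ := fun w => ∑' k, b (n * k) * w ^ k with hHdef
  have hH : ∀ w ∈ ball (0:ℂ) 1, HasSum (fun k => b (n * k) * w ^ k) (H w) := by
    intro w hw
    obtain ⟨z, hz1, hzn⟩ := exists_root w (memBall_iff_abs.1 hw) n hn
    have := step1 z (memBall_iff_abs.2 hz1)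
    rw [hzn] at this
    exact this.summable.hasSum
  have hHb : ∀ w ∈ ball (0:ℂ) 1, ‖H w‖ ≤ 1 := by
    intro w hw
    obtain ⟨z, hz1, hzn⟩ := exists_root w (memBall_iff_abs.1 hw) n hn
    have h6 := step1 z (memBall_iff_abs.2 hz1)
    rw [hzn] at h6
    have : H w = G z := h6.tsum_eq
    rw [this]
    exact hGb z (memBall_iff_abs.2 hz1)
  -- conclude
  have hH0 : H 0 = b 0 := by
    have h7 := hH 0 h0mem
    have h8 : HasSum (fun k => b (n * k) * (0:ℂ) ^ k) (b 0) := by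
      have := hasSum_single (f := fun k => b (n * k) * (0:ℂ) ^ k) 0
        (fun k hk => by simp [zero_pow hk])
      simpa using this
    exact h7.unique h8
  have hHd : deriv H 0 = b n := by
    rw [deriv_eq_of_hasSum (fun k => b (n * k)) H hH, mul_one]
  have := (schwarz_pick H (diffOn_of_hasSum _ H hH) hHb).1
  rwa [hHd, hH0] at this

theorem bohr_rogosinski_tail_N
    (f : ℂ → ℂ) (a : ℕ → ℂ) (p : ℝ) (N m : ℕ) (r : ℝ)
    (hf : DifferentiableOn ℂ f (ball (0:ℂ) 1))
    (hb : ∀ z ∈ ball (0:ℂ) 1, ‖f z‖ ≤ 1)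
    (hsum : ∀ z ∈ ball (0:ℂ) 1, HasSum (fun n : ℕ => a n * z ^ n) (f z))
    (hp : p ∈ Set.Ioc (0:ℝ) 1) (hN : 0 < N) (hm : 0 < m)
    (hr : r ∈ Set.Ico (0:ℝ) 1)
    (hcond : 2 * r ^ N * (1 + r ^ m) ≤ p * (1 - r) * (1 - r ^ m)) :
    ∀ z : ℂ, ‖z‖ = r →
      ‖f (z ^ m)‖ ^ p
        + ∑' n : ℕ, ‖a (N + n)‖ * r ^ (N + n) ≤ 1 := by
  intro z hz
  obtain ⟨hr0, hr1⟩ := hr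
  obtain ⟨hp0, hp1⟩ := hp
  have h0mem : (0:ℂ) ∈ ball (0:ℂ) 1 := mem_ball_self one_pos
  set s : ℝ := r ^ m with hsdef
  have hs0 : 0 ≤ s := pow_nonneg hr0 m
  have hs1 : s < 1 := pow_lt_one₀ hr0 hr1 hm.ne'
  have hwball : z ^ m ∈ ball (0:ℂ) 1 := by
    rw [memBall_iff_abs, norm_pow, hz]
    exact hs1
  set a0 : ℝ := ‖a 0‖ with ha0def
  have hf0 : f 0 = a 0 := by
    have h1 := hsum 0 h0mem
    have h2 : HasSum (fun n : ℕ => a n * (0:ℂ) ^ n) (a 0) := by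
      have := hasSum_single (f := fun n : ℕ => a n * (0:ℂ) ^ n) 0
        (fun k hk => by simp [zero_pow hk])
      simpa using this
    exact h1.unique h2
  have ha0le : a0 ≤ 1 := by
    rw [ha0def, ← hf0]
    exact hb 0 h0mem
  have ha0nn : 0 ≤ a0 := norm_nonneg _
  -- Wiener bounds
  have hW : ∀ j : ℕ, 0 < j → ‖a j‖ ≤ 1 - a0 ^ 2 := fun j hj =>
    wiener f a hsum hb j hj
  -- value bound via Schwarz-Pick
  have hv := (schwarz_pick f hf hb).2 (z ^ m) hwball
  rw [hf0, norm_pow, hz] at hv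
  rw [← ha0def] at hv
  have hden : (0:ℝ) < 1 + a0 * s := by nlinarith
  set T : ℝ := (a0 + s) / (1 + a0 * s) with hTdef
  have habsf : ‖f (z ^ m)‖ ≤ T := by
    rw [hTdef, le_div_iff₀ hden]
    exact hv
  have hT0 : 0 ≤ T := div_nonneg (by linarith) hden.le
  have hT1 : T ≤ 1 := by
    rw [hTdef, div_le_one hden]
    nlinarith
  -- rpow bounds
  have hrp1 : ‖f (z ^ m)‖ ^ p ≤ T ^ p :=
    Real.rpow_le_rpow (norm_nonneg _) habsf hp0.le
  have hrp2 : T ^ p ≤ p * T + (1 - p) := by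
    have := Real.geom_mean_le_arith_mean2_weighted hp0.le (by linarith : (0:ℝ) ≤ 1 - p)
      hT0 zero_le_one (by ring)
    rw [Real.one_rpow, mul_one] at this
    linarith
  -- tail bound
  have hgeo : Summable (fun n : ℕ => r ^ (N + n)) := by
    have h3 : Summable (fun n : ℕ => r ^ N * r ^ n) :=
      (summable_geometric_of_lt_one hr0 hr1).mul_left _
    simpa [pow_add] using h3
  have htb : ∀ n : ℕ, ‖a (N + n)‖ * r ^ (N + n) ≤ (1 - a0 ^ 2) * r ^ (N + n) :=
    fun n => mul_le_mul_of_nonneg_right (hW (N + n) (by omega)) (pow_nonneg hr0 _)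
  have hsummable : Summable (fun n : ℕ => ‖a (N + n)‖ * r ^ (N + n)) := by
    refine Summable.of_nonneg_of_le (fun n => by positivity) htb (hgeo.mul_left _)
  have htail : (∑' n : ℕ, ‖a (N + n)‖ * r ^ (N + n))
      ≤ (1 - a0 ^ 2) * r ^ N / (1 - r) := by
    calc (∑' n : ℕ, ‖a (N + n)‖ * r ^ (N + n))
        ≤ ∑' n : ℕ, (1 - a0 ^ 2) * r ^ (N + n) :=
          Summable.tsum_le_tsum htb hsummable (hgeo.mul_left _)
      _ = (1 - a0 ^ 2) * r ^ N / (1 - r) := by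
          simp only [pow_add, ← mul_assoc]
          rw [tsum_mul_left, tsum_geometric_of_lt_one hr0 hr1]
          field_simp
  -- key algebraic inequality
  have hkey : (1 - a0 ^ 2) * r ^ N / (1 - r) ≤ p * ((1 - a0) * (1 - s)) / (1 + a0 * s) := by
    rw [div_le_div_iff₀ (by linarith) hden]
    have h6 : (1 + a0) * (1 + a0 * s) ≤ 2 * (1 + s) := by nlinarith
    have h7 : (0:ℝ) ≤ (1 - a0) * r ^ N := mul_nonneg (by linarith) (pow_nonneg hr0 _)
    calc (1 - a0 ^ 2) * r ^ N * (1 + a0 * s)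
        = ((1 + a0) * (1 + a0 * s)) * ((1 - a0) * r ^ N) := by ring
      _ ≤ (2 * (1 + s)) * ((1 - a0) * r ^ N) := mul_le_mul_of_nonneg_right h6 h7
      _ = (1 - a0) * (2 * r ^ N * (1 + s)) := by ring
      _ ≤ (1 - a0) * (p * (1 - r) * (1 - s)) :=
          mul_le_mul_of_nonneg_left hcond (by linarith)
      _ = p * ((1 - a0) * (1 - s)) * (1 - r) := by ring
  -- combine
  have hfin : p * ((1 - a0) * (1 - s)) / (1 + a0 * s) = p * (1 - T) := by
    rw [hTdef]
    field_simp
    ring_nf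
    try exact Or.inl trivial
  rw [hfin] at hkey
  have := htail.trans hkey
  linarith
end

section
/- Let f(z) = Σ a_n z^n be analytic on 𝔻 with |f| ≤ 1, p ∈ (0,1], m a positive integer. If r ∈ [0,1) satisfies 2 r (1 + r^m) ≤ p (1 - r^2)(1 - r^m), then for all |z| = r: |f(z^m)|^p + Σ_{n≥1} |a_{2n-1}| r^{2n-1} ≤ 1. -/
open Metric Filter NNReal ENNReal

set_option maxHeartbeats 1000000

noncomputable def brSeries (a : ℕ → ℂ) : FormalMultilinearSeries ℂ ℂ ℂ :=
  fun n => ContinuousMultilinearMap.mkPiRing ℂ (Fin n) (a n)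

lemma brSeries_norm (a : ℕ → ℂ) (n : ℕ) : ‖brSeries a n‖ = ‖a n‖ := by
  simp [brSeries, ContinuousMultilinearMap.norm_mkPiRing]

lemma brSeries_apply (a : ℕ → ℂ) (n : ℕ) (z : ℂ) :
    (brSeries a n fun _ => z) = a n * z ^ n := by
  simp [brSeries, ContinuousMultilinearMap.mkPiRing_apply, smul_eq_mul]
  ring

lemma br_hasFPSAt (f : ℂ → ℂ) (a : ℕ → ℂ)
    (hsum : ∀ z ∈ ball (0:ℂ) 1, HasSum (fun n : ℕ => a n * z ^ n) (f z)) :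
    HasFPowerSeriesAt f (brSeries a) 0 := by
  have hz : (2⁻¹ : ℂ) ∈ ball (0:ℂ) 1 := by
    simp [mem_ball, dist_eq_norm]
    norm_num
  have hs := (hsum _ hz).summable
  have ht : Tendsto (fun n => ‖a n * (2⁻¹:ℂ)^n‖) atTop (nhds 0) := by
    simpa using hs.tendsto_atTop_zero.norm
  obtain ⟨C, hC⟩ := ht.bddAbove_range
  refine ⟨(2⁻¹ : ℝ≥0), ?_, ?_, ?_⟩
  · have := (brSeries a).le_radius_of_bound C (r := (2⁻¹ : ℝ≥0)) ?_
    · exact_mod_cast this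
    · intro n
      have h1 : ‖brSeries a n‖ * ((2⁻¹:ℝ≥0):ℝ)^n = ‖a n * (2⁻¹:ℂ)^n‖ := by
        rw [brSeries_norm, norm_mul, norm_pow]
        norm_num
      rw [h1]
      exact hC ⟨n, rfl⟩
  · norm_num
  · intro y hy
    have hy' : ‖y‖ < 1 := by
      have h2 : (‖y‖₊ : ℝ≥0∞) < ((2⁻¹ : ℝ≥0) : ℝ≥0∞) := by
        simpa [edist_zero_right, enorm_eq_nnnorm] using hy
      have h3 : ‖y‖ < (2⁻¹ : ℝ) := by exact_mod_cast h2
      calc ‖y‖ = ‖y‖ := rfl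
        _ < 2⁻¹ := h3
        _ < 1 := by norm_num
    have := hsum y (by simpa [mem_ball, dist_eq_norm] using hy')
    simp only [brSeries_apply, zero_add]
    exact this

lemma br_coeff_le (f : ℂ → ℂ) (a : ℕ → ℂ)
    (hf : DifferentiableOn ℂ f (ball (0:ℂ) 1))
    (hb : ∀ z ∈ ball (0:ℂ) 1, ‖f z‖ ≤ 1)
    (hsum : ∀ z ∈ ball (0:ℂ) 1, HasSum (fun n : ℕ => a n * z ^ n) (f z))
    (n : ℕ) : ‖a n‖ ≤ 1 := by
  have hat := br_hasFPSAt f a hsum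
  have key : ∀ s : ℝ, 0 < s → s < 1 → ‖a n‖ * s ^ n ≤ 1 := by
    intro s hs0 hs1
    set s' : ℝ≥0 := ⟨s, hs0.le⟩ with hs'
    have hsub : closedBall (0:ℂ) s' ⊆ ball (0:ℂ) 1 := closedBall_subset_ball (by exact_mod_cast hs1)
    have hdc : DifferentiableOn ℂ f (closedBall (0:ℂ) s') := hf.mono hsub
    have hcs := hdc.hasFPowerSeriesOnBall (R := s') (by exact_mod_cast hs0)
    have heq : brSeries a = cauchyPowerSeries f 0 s' :=
      hat.eq_formalMultilinearSeries hcs.hasFPowerSeriesAt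
    have h1 : ‖a n‖ = ‖cauchyPowerSeries f 0 (s':ℝ) n‖ := by
      rw [← heq, brSeries_norm]
    have h2 := norm_cauchyPowerSeries_le f 0 (s':ℝ) n
    have hmem : ∀ θ : ℝ, circleMap 0 s θ ∈ ball (0:ℂ) 1 := by
      intro θ
      simp only [mem_ball, dist_zero_right, norm_circleMap_zero]
      rwa [abs_of_pos hs0]
    have hcont : Continuous fun θ : ℝ => f (circleMap 0 s θ) :=
      hf.continuousOn.comp_continuous (continuous_circleMap 0 s) hmem
    have hint : (∫ θ : ℝ in (0)..2 * Real.pi, ‖f (circleMap 0 s θ)‖)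
        ≤ ∫ _ : ℝ in (0)..2 * Real.pi, (1:ℝ) := by
      apply intervalIntegral.integral_mono_on Real.two_pi_pos.le
        (hcont.norm.intervalIntegrable _ _) intervalIntegrable_const
      intro θ _
      exact hb _ (hmem θ)
    have hint2 : (∫ _ : ℝ in (0)..2 * Real.pi, (1:ℝ)) = 2 * Real.pi := by simp
    have h3 : ‖cauchyPowerSeries f 0 (s':ℝ) n‖ ≤ (s⁻¹) ^ n := by
      refine h2.trans ?_
      have habs : |(s':ℝ)| = s := abs_of_pos hs0
      rw [habs]
      calc (2 * Real.pi)⁻¹ * (∫ θ : ℝ in (0)..2 * Real.pi, ‖f (circleMap 0 s θ)‖) * s⁻¹ ^ n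
          ≤ (2 * Real.pi)⁻¹ * (2 * Real.pi) * s⁻¹ ^ n := by
            apply mul_le_mul_of_nonneg_right _ (by positivity)
            apply mul_le_mul_of_nonneg_left _ (by positivity)
            calc (∫ θ : ℝ in (0)..2 * Real.pi, ‖f (circleMap 0 s θ)‖) ≤ ∫ _ : ℝ in (0)..2 * Real.pi, (1:ℝ) := hint
              _ = 2 * Real.pi := hint2
        _ = s⁻¹ ^ n := by
            rw [inv_mul_cancel₀ Real.two_pi_pos.ne']; ring
    have := h1 ▸ h3
    calc ‖a n‖ * s ^ n ≤ s⁻¹ ^ n * s ^ n := by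
          apply mul_le_mul_of_nonneg_right this (by positivity)
      _ = 1 := by
          rw [← mul_pow, inv_mul_cancel₀ hs0.ne', one_pow]
  -- now take the limit s → 1⁻
  have htend : Tendsto (fun s : ℝ => ‖a n‖ * s ^ n) (nhdsWithin 1 (Set.Iio 1))
      (nhds (‖a n‖)) := by
    have : Continuous fun s : ℝ => ‖a n‖ * s ^ n := by continuity
    simpa using (this.tendsto 1).mono_left nhdsWithin_le_nhds
  refine le_of_tendsto htend ?_
  filter_upwards [Ioo_mem_nhdsLT_of_mem (Set.mem_Ioc.2 ⟨zero_lt_one, le_refl 1⟩)] with s hs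
  exact key s hs.1 hs.2

lemma emetric_unit_ball : Metric.eball (0:ℂ) 1 = ball (0:ℂ) 1 := by
  have := Metric.eball_coe (x := (0:ℂ)) (ε := 1)
  simpa using this

lemma br_hasFPSOnBall (b : ℕ → ℂ) (hb : ∀ k, ‖b k‖ ≤ 1) :
    HasFPowerSeriesOnBall (fun w => ∑' k : ℕ, b k * w ^ k) (brSeries b) 0 1 := by
  constructor
  · apply le_of_forall_nnreal_lt
    intro r hr
    have hr1 : (r:ℝ) ≤ 1 := by
      have : (r : ℝ≥0∞) ≤ 1 := hr.le
      exact_mod_cast this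
    apply (brSeries b).le_radius_of_bound 1
    intro k
    rw [brSeries_norm]
    calc ‖b k‖ * (r:ℝ) ^ k ≤ 1 * 1 ^ k := by
          apply mul_le_mul (hb k) (pow_le_pow_left₀ r.coe_nonneg hr1 k) (by positivity) zero_le_one
      _ = 1 := by norm_num
  · exact one_pos
  · intro y hy
    have hy1 : ‖y‖ < 1 := by
      rw [emetric_unit_ball] at hy
      simpa [mem_ball, dist_zero_right] using hy
    have hsummable : Summable (fun k : ℕ => b k * y ^ k) := by
      apply Summable.of_norm_bounded (summable_geometric_of_lt_one (norm_nonneg y) hy1)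
      intro k
      calc ‖b k * y ^ k‖ = ‖b k‖ * ‖y‖ ^ k := by
            rw [norm_mul, norm_pow]
        _ ≤ 1 * ‖y‖ ^ k := by
            apply mul_le_mul_of_nonneg_right (hb k) (by positivity)
        _ = ‖y‖ ^ k := one_mul _
    simp only [brSeries_apply, zero_add]
    exact hsummable.hasSum

lemma den_ne_zero {x : ℂ} (hx : ‖x‖ < 1) : (1:ℂ) - x ≠ 0 := by
  intro h
  have : x = 1 := by linear_combination -h
  rw [this] at hx
  simp at hx

lemma moebius_lt_one {c w : ℂ} (hc : ‖c‖ < 1) (hw : ‖w‖ < 1) :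
    ‖(w - c) / (1 - (starRingEnd ℂ) c * w)‖ < 1 := by
  have hcw : ‖(starRingEnd ℂ) c * w‖ < 1 := by
    rw [norm_mul, Complex.norm_conj]
    nlinarith [norm_nonneg c, norm_nonneg w]
  have hd0 : (1:ℂ) - (starRingEnd ℂ) c * w ≠ 0 := den_ne_zero hcw
  have hdpos : 0 < ‖1 - (starRingEnd ℂ) c * w‖ := norm_pos_iff.mpr hd0
  rw [norm_div, div_lt_one hdpos]
  have hc2 : c.re^2 + c.im^2 < 1 := by
    have := Complex.sq_norm c
    rw [Complex.normSq_apply] at this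
    nlinarith [norm_nonneg c]
  have hw2 : w.re^2 + w.im^2 < 1 := by
    have := Complex.sq_norm w
    rw [Complex.normSq_apply] at this
    nlinarith [norm_nonneg w]
  have e1 : (‖w - c‖)^2 = (w.re - c.re)^2 + (w.im - c.im)^2 := by
    rw [Complex.sq_norm, Complex.normSq_apply]
    simp [Complex.sub_re, Complex.sub_im]
    ring
  have e2 : (‖1 - (starRingEnd ℂ) c * w‖)^2 =
      (1 - (c.re * w.re + c.im * w.im))^2 + (c.re * w.im - c.im * w.re)^2 := by
    rw [Complex.sq_norm, Complex.normSq_apply]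
    simp [Complex.sub_re, Complex.sub_im, Complex.mul_re, Complex.mul_im]
    ring
  have h2 : (‖w - c‖)^2 < (‖1 - (starRingEnd ℂ) c * w‖)^2 := by
    rw [e1, e2]
    nlinarith [mul_pos (sub_pos.2 hc2) (sub_pos.2 hw2)]
  exact lt_of_pow_lt_pow_left₀ 2 hdpos.le h2

lemma sp_abs (f : ℂ → ℂ) (hf : DifferentiableOn ℂ f (ball (0:ℂ) 1))
    (hlt : ∀ z ∈ ball (0:ℂ) 1, ‖f z‖ < 1) {w : ℂ} (hw : w ∈ ball (0:ℂ) 1) :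
    ‖f w‖ ≤ (‖f 0‖ + ‖w‖)
      / (1 + ‖f 0‖ * ‖w‖) := by
  set c := f 0 with hcdef
  have h0mem : (0:ℂ) ∈ ball (0:ℂ) 1 := by simp
  have hc : ‖c‖ < 1 := hlt 0 h0mem
  set g : ℂ → ℂ := fun z => (f z - c) / (1 - (starRingEnd ℂ) c * f z) with hgdef
  have hden : ∀ z ∈ ball (0:ℂ) 1, (1:ℂ) - (starRingEnd ℂ) c * f z ≠ 0 := by
    intro z hz
    apply den_ne_zero
    rw [norm_mul, Complex.norm_conj]
    nlinarith [hlt z hz, norm_nonneg c, norm_nonneg (f z), hc]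
  have hg : DifferentiableOn ℂ g (ball (0:ℂ) 1) := by
    apply DifferentiableOn.div (hf.sub (differentiableOn_const c))
      ((differentiableOn_const 1).sub ((differentiableOn_const _).mul hf)) hden
  have hg0 : g 0 = 0 := by simp [hgdef, hcdef]
  have hmaps : Set.MapsTo g (ball (0:ℂ) 1) (ball (0:ℂ) 1) := by
    intro z hz
    rw [mem_ball_zero_iff]
    exact moebius_lt_one hc (hlt z hz)
  have hs : ‖g w‖ ≤ ‖w‖ := by
    apply Complex.norm_le_norm_of_mapsTo_ball hg (hmaps.mono_right ball_subset_closedBall) hg0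
    simpa [mem_ball_zero_iff] using hw
  -- unravel
  set u := f w with hudef
  have hu : ‖u‖ < 1 := hlt w hw
  set A := ‖u - c‖ with hA
  set B := ‖1 - (starRingEnd ℂ) c * u‖ with hB
  have hB0 : 0 < B := norm_pos_iff.mpr (hden w hw)
  have hgw : ‖g w‖ = A / B := by rw [hgdef]; exact norm_div _ _
  set a := ‖c‖ with ha
  set bb := ‖u‖ with hbb
  have ha0 : 0 ≤ a := norm_nonneg c
  have hb0 : 0 ≤ bb := norm_nonneg u
  have hA0 : 0 ≤ A := norm_nonneg _
  set t := c.re * u.re + c.im * u.im with ht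
  have htle : t ≤ a * bb := by
    have h1 : ((starRingEnd ℂ) c * u).re ≤ ‖(starRingEnd ℂ) c * u‖ :=
      Complex.re_le_norm _
    have h2 : ((starRingEnd ℂ) c * u).re = t := by
      simp [Complex.mul_re, Complex.conj_re, Complex.conj_im, ht]
    have h3 : ‖(starRingEnd ℂ) c * u‖ = a * bb := by
      rw [norm_mul, Complex.norm_conj]
    rw [h2, h3] at h1
    exact h1
  have hc2 : a^2 = c.re^2 + c.im^2 := by
    rw [ha, Complex.sq_norm, Complex.normSq_apply]; ring
  have hu2 : bb^2 = u.re^2 + u.im^2 := by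
    rw [hbb, Complex.sq_norm, Complex.normSq_apply]; ring
  have hA2 : A^2 = a^2 + bb^2 - 2*t := by
    rw [hA, Complex.sq_norm, Complex.normSq_apply, hc2, hu2]
    simp [Complex.sub_re, Complex.sub_im, ht]
    ring
  have hB2 : B^2 = 1 + (a*bb)^2 - 2*t := by
    rw [hB, Complex.sq_norm, Complex.normSq_apply]
    have : (a*bb)^2 = (c.re^2 + c.im^2) * (u.re^2 + u.im^2) := by
      rw [mul_pow, hc2, hu2]
    rw [this]
    simp [Complex.sub_re, Complex.sub_im, Complex.mul_re, Complex.mul_im, Complex.conj_re,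
      Complex.conj_im, ht]
    ring
  have hab1 : a * bb < 1 := by nlinarith [hc, hu]
  -- step 1 : bb * (B + a * A) ≤ a * B + A
  have step1 : bb * (B + a * A) ≤ a * B + A := by
    have hkey : (bb - a) * B ≤ (1 - a*bb) * A := by
      rcases le_or_gt bb a with hba | hba
      · calc (bb - a) * B ≤ 0 := mul_nonpos_of_nonpos_of_nonneg (by linarith) hB0.le
          _ ≤ (1 - a*bb) * A := mul_nonneg (by linarith) hA0
      · have hsq : ((bb - a) * B)^2 ≤ ((1 - a*bb) * A)^2 := by
          have hid : ((1 - a*bb) * A)^2 - ((bb - a) * B)^2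
              = (1 - a^2) * (1 - bb^2) * (2*(a*bb) - 2*t) := by
            rw [mul_pow, mul_pow, hA2, hB2]; ring
          have hprod : 0 ≤ (1 - a^2) * (1 - bb^2) * (2*(a*bb) - 2*t) :=
            mul_nonneg (mul_nonneg (by nlinarith [hc] : (0:ℝ) ≤ 1 - a^2)
              (by nlinarith [hu] : (0:ℝ) ≤ 1 - bb^2)) (by linarith : (0:ℝ) ≤ 2*(a*bb) - 2*t)
          linarith [hid, hprod]
        have hrhs0 : 0 ≤ (1 - a*bb) * A := mul_nonneg (by linarith) hA0
        have := le_of_pow_le_pow_left₀ (n := 2) (by norm_num) hrhs0 hsq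
        calc (bb - a) * B ≤ |(bb - a) * B| := le_abs_self _
          _ = (bb - a) * B := abs_of_nonneg (mul_nonneg (by linarith) hB0.le)
          _ ≤ (1 - a*bb) * A := this
    nlinarith [hkey]
  -- step 2 : conclude
  have hsAB : A / B ≤ ‖w‖ := by rw [← hgw]; exact hs
  have hdenpos : 0 < 1 + a * ‖w‖ := by positivity
  rw [le_div_iff₀ hdenpos]
  have hwnn : 0 ≤ ‖w‖ := norm_nonneg w
  -- from step1: bb * (1 + a * (A/B)) ≤ a + A/B
  have step1' : bb * (1 + a * (A/B)) ≤ a + A/B := by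
    rw [div_eq_mul_inv]
    have hBi : 0 < B⁻¹ := inv_pos.2 hB0
    have := mul_le_mul_of_nonneg_right step1 hBi.le
    calc bb * (1 + a * (A * B⁻¹)) = (bb * (B + a * A)) * B⁻¹ := by
          field_simp
        _ ≤ (a * B + A) * B⁻¹ := this
        _ = a + A * B⁻¹ := by field_simp
  set s := A / B with hsdef
  have hs0 : 0 ≤ s := div_nonneg hA0 hB0.le
  nlinarith [step1', hsAB, mul_nonneg ha0 (sub_nonneg.2 hsAB), hab1, hb0, hu]

lemma sp_deriv (f : ℂ → ℂ) (hf : DifferentiableOn ℂ f (ball (0:ℂ) 1))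
    (hlt : ∀ z ∈ ball (0:ℂ) 1, ‖f z‖ < 1) :
    ‖deriv f 0‖ ≤ 1 - ‖f 0‖ ^ 2 := by
  set c := f 0 with hcdef
  have h0mem : (0:ℂ) ∈ ball (0:ℂ) 1 := by simp
  have hc : ‖c‖ < 1 := hlt 0 h0mem
  set g : ℂ → ℂ := fun z => (f z - c) / (1 - (starRingEnd ℂ) c * f z) with hgdef
  have hden : ∀ z ∈ ball (0:ℂ) 1, (1:ℂ) - (starRingEnd ℂ) c * f z ≠ 0 := by
    intro z hz
    apply den_ne_zero
    rw [norm_mul, Complex.norm_conj]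
    nlinarith [hlt z hz, norm_nonneg c, norm_nonneg (f z)]
  have hg : DifferentiableOn ℂ g (ball (0:ℂ) 1) :=
    DifferentiableOn.div (hf.sub (differentiableOn_const c))
      ((differentiableOn_const 1).sub ((differentiableOn_const _).mul hf)) hden
  have hg0 : g 0 = 0 := by simp [hgdef, hcdef]
  have hmaps : Set.MapsTo g (ball (0:ℂ) 1) (ball (0:ℂ) 1) := by
    intro z hz
    rw [mem_ball_zero_iff]
    exact moebius_lt_one hc (hlt z hz)
  -- derivative of g at 0
  have hfd : DifferentiableAt ℂ f 0 := hf.differentiableAt (isOpen_ball.mem_nhds h0mem)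
  set d := deriv f 0 with hddef
  have h1 : HasDerivAt (fun z => f z - c) d 0 := hfd.hasDerivAt.sub_const c
  have h2 : HasDerivAt (fun z => (1:ℂ) - (starRingEnd ℂ) c * f z)
      (-((starRingEnd ℂ) c * d)) 0 := by
    have := (hfd.hasDerivAt.const_mul ((starRingEnd ℂ) c)).const_sub 1
    simpa using this
  have hden0 : (1:ℂ) - (starRingEnd ℂ) c * f 0 ≠ 0 := hden 0 h0mem
  have h3 : HasDerivAt g
      ((d * (1 - (starRingEnd ℂ) c * f 0) - (f 0 - c) * -((starRingEnd ℂ) c * d))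
        / (1 - (starRingEnd ℂ) c * f 0) ^ 2) 0 := h1.div h2 hden0
  have hgd : deriv g 0 = d / (1 - (starRingEnd ℂ) c * c) := by
    rw [h3.deriv]
    simp only [← hcdef]
    rw [sub_self, zero_mul, sub_zero, pow_two, mul_div_mul_right _ _ (show (1:ℂ) - (starRingEnd ℂ) c * c ≠ 0 from hden0)]
  -- Schwarz lemma
  have hmaps' : Set.MapsTo g (ball (0:ℂ) 1) (ball (g 0) 1) := by rw [hg0]; exact hmaps
  have hschwarz := Complex.norm_deriv_le_div_of_mapsTo_ball hg (hmaps'.mono_right ball_subset_closedBall) one_pos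
  rw [hgd, norm_div] at hschwarz
  have hXval : ‖1 - (starRingEnd ℂ) c * c‖ = 1 - ‖c‖ ^ 2 := by
    have h4 : (starRingEnd ℂ) c * c = ((Complex.normSq c : ℝ) : ℂ) := by
      rw [mul_comm, Complex.mul_conj]
    rw [h4]
    have h5 : ((1:ℂ) - ((Complex.normSq c : ℝ) : ℂ)) = (((1 - Complex.normSq c : ℝ)) : ℂ) := by
      push_cast; ring
    rw [h5, Complex.norm_real, Real.norm_eq_abs, abs_of_nonneg, Complex.sq_norm]
    rw [← Complex.sq_norm]
    nlinarith [norm_nonneg c]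
  rw [hXval, div_one] at hschwarz
  have hXpos : 0 < 1 - ‖c‖ ^ 2 := by nlinarith [norm_nonneg c]
  rw [div_le_one hXpos] at hschwarz
  linarith [hschwarz]

lemma wiener_s9 (f : ℂ → ℂ) (a : ℕ → ℂ)
    (hf : DifferentiableOn ℂ f (ball (0:ℂ) 1))
    (hb : ∀ z ∈ ball (0:ℂ) 1, ‖f z‖ ≤ 1)
    (hsum : ∀ z ∈ ball (0:ℂ) 1, HasSum (fun n : ℕ => a n * z ^ n) (f z))
    (hlt : ∀ z ∈ ball (0:ℂ) 1, ‖f z‖ < 1)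
    {n : ℕ} (hn : 0 < n) :
    ‖a n‖ ≤ 1 - ‖a 0‖ ^ 2 := by
  classical
  set b : ℕ → ℂ := fun k => a (n * k) with hbdef
  have hbk : ∀ k, ‖b k‖ ≤ 1 := fun k => br_coeff_le f a hf hb hsum (n * k)
  set h : ℂ → ℂ := fun w => ∑' k : ℕ, b k * w ^ k with hhdef
  have hfps : HasFPowerSeriesOnBall h (brSeries b) 0 1 := br_hasFPSOnBall b hbk
  have hdiff : DifferentiableOn ℂ h (ball (0:ℂ) 1) := by
    have := hfps.differentiableOn
    rwa [emetric_unit_ball] at this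

  set zeta : ℂ := Complex.exp (2 * Real.pi * Complex.I / n) with hzdef
  have hzprim : IsPrimitiveRoot zeta n := Complex.isPrimitiveRoot_exp n hn.ne'
  have hzabs : ‖zeta‖ = 1 := by
    have hrw : 2 * (Real.pi:ℂ) * Complex.I / n = ((2 * Real.pi / n : ℝ) : ℂ) * Complex.I := by
      push_cast; ring
    rw [hzdef, hrw, Complex.norm_exp_ofReal_mul_I]
  have havg : ∀ z ∈ ball (0:ℂ) 1, HasSum (fun k : ℕ => b k * (z ^ n) ^ k)
      ((n:ℂ)⁻¹ * ∑ j ∈ Finset.range n, f (zeta ^ j * z)) := by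
    intro z hz
    have hzlt : ‖z‖ < 1 := by simpa [mem_ball_zero_iff] using hz
    have hjz : ∀ j : ℕ, zeta ^ j * z ∈ ball (0:ℂ) 1 := by
      intro j
      rw [mem_ball_zero_iff]
      show ‖zeta ^ j * z‖ < 1
      rw [norm_mul, norm_pow, hzabs, one_pow, one_mul]
      exact hzlt
    have H1 : HasSum (fun k : ℕ => ∑ j ∈ Finset.range n, a k * (zeta ^ j * z) ^ k)
        (∑ j ∈ Finset.range n, f (zeta ^ j * z)) :=
      hasSum_sum (fun j _ => hsum _ (hjz j))
    have hterm : ∀ k : ℕ, (∑ j ∈ Finset.range n, a k * (zeta ^ j * z) ^ k)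
        = if n ∣ k then (n:ℂ) * (a k * z ^ k) else 0 := by
      intro k
      have hfac : ∀ j : ℕ, a k * (zeta ^ j * z) ^ k = (a k * z ^ k) * (zeta ^ k) ^ j := by
        intro j
        rw [mul_pow, ← pow_mul, mul_comm j k, pow_mul]
        ring
      rw [Finset.sum_congr rfl (fun j _ => hfac j), ← Finset.mul_sum]
      by_cases hdvd : n ∣ k
      · have h1 : zeta ^ k = 1 := (hzprim.pow_eq_one_iff_dvd k).2 hdvd
        rw [if_pos hdvd, h1]
        simp
        ring
      · have hne : zeta ^ k ≠ 1 := fun hh => hdvd ((hzprim.pow_eq_one_iff_dvd k).1 hh)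
        rw [if_neg hdvd, geom_sum_eq hne]
        have : (zeta ^ k) ^ n = 1 := by
          rw [← pow_mul, mul_comm k n, pow_mul, hzprim.pow_eq_one, one_pow]
        rw [this]
        simp
    have H1' : HasSum (fun k : ℕ => if n ∣ k then (n:ℂ) * (a k * z ^ k) else 0)
        (∑ j ∈ Finset.range n, f (zeta ^ j * z)) := by
      rwa [funext hterm] at H1
    have hinj : Function.Injective (fun k : ℕ => n * k) := fun x y hxy =>
      Nat.eq_of_mul_eq_mul_left hn hxy
    have hsupp : ∀ k, k ∉ Set.range (fun k : ℕ => n * k) →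
        (if n ∣ k then (n:ℂ) * (a k * z ^ k) else 0) = 0 := by
      intro k hk
      rw [if_neg]
      intro hdvd
      obtain ⟨c, rfl⟩ := hdvd
      exact hk ⟨c, rfl⟩
    have H2 : HasSum (fun k : ℕ => (n:ℂ) * (b k * (z ^ n) ^ k))
        (∑ j ∈ Finset.range n, f (zeta ^ j * z)) := by
      have H3 := (hinj.hasSum_iff hsupp).2 H1'
      have hcomp : ∀ k : ℕ, ((fun k : ℕ => if n ∣ k then (n:ℂ) * (a k * z ^ k) else 0)
          ∘ (fun k : ℕ => n * k)) k = (n:ℂ) * (b k * (z ^ n) ^ k) := by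
        intro k
        simp only [Function.comp_apply, if_pos (Dvd.intro k rfl), hbdef, ← pow_mul]
      rwa [funext hcomp] at H3
    have H4 := H2.mul_left ((n:ℂ)⁻¹)
    have hncne : (n:ℂ) ≠ 0 := Nat.cast_ne_zero.2 hn.ne'
    have hsimp : ∀ k : ℕ, (n:ℂ)⁻¹ * ((n:ℂ) * (b k * (z ^ n) ^ k)) = b k * (z ^ n) ^ k := by
      intro k
      rw [← mul_assoc, inv_mul_cancel₀ hncne, one_mul]
    rwa [funext hsimp] at H4
  have hlt' : ∀ w ∈ ball (0:ℂ) 1, ‖h w‖ < 1 := by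
    intro w hw
    have hwlt : ‖w‖ < 1 := by simpa [mem_ball_zero_iff] using hw
    obtain ⟨z, hzn, hzlt⟩ : ∃ z : ℂ, z ^ n = w ∧ ‖z‖ < 1 := by
      by_cases hw0 : w = 0
      · exact ⟨0, by rw [zero_pow hn.ne', hw0], by simp⟩
      · refine ⟨w ^ ((n:ℂ)⁻¹), Complex.cpow_nat_inv_pow w hn.ne', ?_⟩
        rw [Complex.norm_cpow_inv_nat]
        exact Real.rpow_lt_one (norm_nonneg w) hwlt (by positivity)
    have hzmem : z ∈ ball (0:ℂ) 1 := by rwa [mem_ball_zero_iff]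
    have hsum2 := havg z hzmem
    rw [hzn] at hsum2
    have hhw : h w = (n:ℂ)⁻¹ * ∑ j ∈ Finset.range n, f (zeta ^ j * z) := hsum2.tsum_eq
    rw [hhw]
    have hjz : ∀ j : ℕ, zeta ^ j * z ∈ ball (0:ℂ) 1 := by
      intro j
      rw [mem_ball_zero_iff]
      show ‖zeta ^ j * z‖ < 1
      rw [norm_mul, norm_pow, hzabs, one_pow, one_mul]
      exact hzlt
    calc ‖(n:ℂ)⁻¹ * ∑ j ∈ Finset.range n, f (zeta ^ j * z)‖
        ≤ (n:ℝ)⁻¹ * ∑ j ∈ Finset.range n, ‖f (zeta ^ j * z)‖ := by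
          rw [norm_mul, norm_inv, Complex.norm_natCast]
          apply mul_le_mul_of_nonneg_left _ (by positivity)
          · exact norm_sum_le _ _
      _ < (n:ℝ)⁻¹ * n := by
          apply mul_lt_mul_of_pos_left _ (by positivity)
          calc (∑ j ∈ Finset.range n, ‖f (zeta ^ j * z)‖)
              < ∑ _j ∈ Finset.range n, (1:ℝ) := by
                apply Finset.sum_lt_sum_of_nonempty (Finset.nonempty_range_iff.2 hn.ne')
                intro j _
                exact hlt _ (hjz j)
            _ = n := by simp
      _ = 1 := by
          rw [inv_mul_cancel₀ (by exact_mod_cast hn.ne' : (n:ℝ) ≠ 0)]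
  have h0 : h 0 = a 0 := by
    have hsingle : HasSum (fun k : ℕ => b k * (0:ℂ) ^ k) (b 0) := by
      have := hasSum_single (f := fun k : ℕ => b k * (0:ℂ) ^ k) 0
        (fun k hk => by simp [zero_pow hk])
      simpa using this
    have heq : h 0 = b 0 := hsingle.tsum_eq
    rw [heq, hbdef]
    simp
  have hd0 : deriv h 0 = a n := by
    rw [hfps.hasFPowerSeriesAt.deriv, brSeries_apply]
    simp [hbdef]
  have hfin := sp_deriv h hdiff hlt'
  rw [hd0, h0] at hfin
  exact hfin

theorem bohr_rogosinski_odd_coeffs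
    (f : ℂ → ℂ) (a : ℕ → ℂ) (p : ℝ) (m : ℕ) (r : ℝ)
    (hf : DifferentiableOn ℂ f (ball (0:ℂ) 1))
    (hb : ∀ z ∈ ball (0:ℂ) 1, ‖f z‖ ≤ 1)
    (hsum : ∀ z ∈ ball (0:ℂ) 1, HasSum (fun n : ℕ => a n * z ^ n) (f z))
    (hp : p ∈ Set.Ioc (0:ℝ) 1) (hm : 0 < m)
    (hr : r ∈ Set.Ico (0:ℝ) 1)
    (hcond : 2 * r * (1 + r ^ m) ≤ p * (1 - r ^ 2) * (1 - r ^ m)) :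
    ∀ z : ℂ, ‖z‖ = r →
      ‖f (z ^ m)‖ ^ p
        + ∑' n : ℕ, ‖a (2 * n + 1)‖ * r ^ (2 * n + 1) ≤ 1 := by
  intro z hz
  obtain ⟨hp0, hp1⟩ := hp
  obtain ⟨hr0, hr1⟩ := hr
  have hrm : r ^ m < 1 := pow_lt_one₀ hr0 hr1 hm.ne'
  have hrm0 : 0 ≤ r ^ m := by positivity
  have hzm : z ^ m ∈ ball (0:ℂ) 1 := by
    rw [mem_ball_zero_iff]
    show ‖z ^ m‖ < 1
    rw [norm_pow, hz]
    exact hrm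
  have habszm : ‖z ^ m‖ = r ^ m := by rw [norm_pow, hz]
  by_cases hstrict : ∀ y ∈ ball (0:ℂ) 1, ‖f y‖ < 1
  case neg =>
    -- f is constant on the ball
    push_neg at hstrict
    obtain ⟨y, hy, hy1⟩ := hstrict
    have hmax : IsMaxOn (norm ∘ f) (ball (0:ℂ) 1) y := by
      intro x hx
      simp only [Function.comp_apply]
      calc ‖f x‖ ≤ 1 := hb x hx
        _ ≤ ‖f y‖ := hy1
    have hconst := Complex.eqOn_of_isPreconnected_of_isMaxOn_norm
      (convex_ball (0:ℂ) 1).isPreconnected isOpen_ball hf hy hmax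
    have hev : f =ᶠ[nhds (0:ℂ)] (fun _ => f y) := by
      filter_upwards [isOpen_ball.mem_nhds (by simp : (0:ℂ) ∈ ball (0:ℂ) 1)] with x hx
      exact hconst hx
    have hP := br_hasFPSAt f a hsum
    have hQ : HasFPowerSeriesAt f (constFormalMultilinearSeries ℂ ℂ (f y)) 0 :=
      hasFPowerSeriesAt_const.congr hev.symm
    have heq := hP.eq_formalMultilinearSeries hQ
    have hodd : ∀ n : ℕ, a (2 * n + 1) = 0 := by
      intro n
      have h1 := congrFun heq (2 * n + 1)
      have h2 : (brSeries a (2*n+1) fun _ => (1:ℂ))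
          = (constFormalMultilinearSeries ℂ ℂ (f y) (2*n+1) fun _ => (1:ℂ)) := by rw [h1]
      rw [brSeries_apply, constFormalMultilinearSeries_apply_of_nonzero (by omega)] at h2
      simpa using h2
    have hT : (∑' n : ℕ, ‖a (2 * n + 1)‖ * r ^ (2 * n + 1)) = 0 := by
      have : ∀ n : ℕ, ‖a (2 * n + 1)‖ * r ^ (2 * n + 1) = 0 := by
        intro n; rw [hodd n]; simp
      rw [funext this]
      exact tsum_zero
    rw [hT, add_zero]
    apply Real.rpow_le_one (norm_nonneg _) (hb _ hzm) hp0.le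
  case pos =>
    have ha0f : a 0 = f 0 := by
      have h1 : HasSum (fun n : ℕ => a n * (0:ℂ) ^ n) (a 0) := by
        have := hasSum_single (f := fun n : ℕ => a n * (0:ℂ) ^ n) 0
          (fun k hk => by simp [zero_pow hk])
        simpa using this
      exact h1.unique (hsum 0 (by simp))
    set a0 := ‖a 0‖ with ha0def
    have ha0lt : a0 < 1 := by rw [ha0def, ha0f]; exact hstrict 0 (by simp)
    have ha0nn : 0 ≤ a0 := norm_nonneg _
    set ρ := r ^ m with hρdef
    -- tail sum bound
    have hgeo_sum : Summable (fun n : ℕ => (r^2)^n * r) :=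
      (summable_geometric_of_lt_one (by positivity) (by nlinarith)).mul_right r
    have hpow_eq : ∀ n : ℕ, r ^ (2*n+1) = (r^2)^n * r := by
      intro n
      rw [pow_succ, pow_mul]
    have hsum1 : Summable (fun n : ℕ => ‖a (2*n+1)‖ * r ^ (2*n+1)) := by
      apply Summable.of_nonneg_of_le (fun n => by positivity)
        (fun n => ?_) hgeo_sum
      rw [← hpow_eq n]
      calc ‖a (2*n+1)‖ * r ^ (2*n+1) ≤ 1 * r ^ (2*n+1) :=
            mul_le_mul_of_nonneg_right (br_coeff_le f a hf hb hsum _) (by positivity)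
        _ = r ^ (2*n+1) := one_mul _
    have hsum2 : Summable (fun n : ℕ => (1 - a0^2) * ((r^2)^n * r)) := hgeo_sum.mul_left _
    have hT : (∑' n : ℕ, ‖a (2*n+1)‖ * r ^ (2*n+1))
        ≤ (1 - a0^2) * (r * (1 - r^2)⁻¹) := by
      calc (∑' n : ℕ, ‖a (2*n+1)‖ * r ^ (2*n+1))
          ≤ ∑' n : ℕ, (1 - a0^2) * ((r^2)^n * r) := by
            apply Summable.tsum_le_tsum _ hsum1 hsum2
            intro n
            rw [← hpow_eq n]
            exact mul_le_mul_of_nonneg_right (wiener_s9 f a hf hb hsum hstrict (by omega))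
              (by positivity)
        _ = (1 - a0^2) * (r * (1 - r^2)⁻¹) := by
            have hfe : (fun n : ℕ => (1 - a0^2) * ((r^2)^n * r))
                = fun n : ℕ => ((1 - a0^2) * r) * (r^2)^n := by
              funext n; ring
            rw [hfe]
            have hgs : HasSum (fun n : ℕ => ((1 - a0^2) * r) * (r^2)^n)
                (((1 - a0^2) * r) * (1 - r^2)⁻¹) :=
              (hasSum_geometric_of_lt_one (by positivity) (by nlinarith)).mul_left _
            rw [hgs.tsum_eq]
            ring
    -- function value bound
    have hfb := sp_abs f hf hstrict hzm
    rw [habszm, ← ha0f, ← ha0def] at hfb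
    set x := (a0 + ρ) / (1 + a0 * ρ) with hxdef
    have hdenpos : 0 < 1 + a0 * ρ := by positivity
    have hx0 : 0 ≤ x := div_nonneg (by linarith) hdenpos.le
    have hfnn : 0 ≤ ‖f (z^m)‖ := norm_nonneg _
    have hrp1 : ‖f (z^m)‖ ^ p ≤ x ^ p := Real.rpow_le_rpow hfnn hfb hp0.le
    have hrp2 : x ^ p ≤ p * x + (1 - p) := by
      have := Real.geom_mean_le_arith_mean2_weighted hp0.le (by linarith : (0:ℝ) ≤ 1 - p)
        hx0 zero_le_one (by ring)
      simpa using this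
    -- key algebraic inequality
    have hkey : (1 - a0^2) * (r * (1 - r^2)⁻¹) ≤ p * (1 - x) := by
      have hr2 : 0 < 1 - r^2 := by nlinarith
      have h2 : (1 + a0) * (1 + a0 * ρ) ≤ 2 * (1 + ρ) := by nlinarith
      have h3 : (1 - a0) * (2 * r * (1 + ρ)) ≤ (1 - a0) * (p * (1 - r^2) * (1 - ρ)) :=
        mul_le_mul_of_nonneg_left hcond (by linarith)
      have main : (1 - a0^2) * r * (1 + a0 * ρ) ≤ p * ((1 - a0) * (1 - ρ)) * (1 - r^2) := by
        calc (1 - a0^2) * r * (1 + a0 * ρ) = (1 - a0) * (((1 + a0) * (1 + a0 * ρ)) * r) := by ring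
          _ ≤ (1 - a0) * ((2 * (1 + ρ)) * r) := by
              apply mul_le_mul_of_nonneg_left _ (by linarith)
              exact mul_le_mul_of_nonneg_right h2 hr0
          _ = (1 - a0) * (2 * r * (1 + ρ)) := by ring
          _ ≤ (1 - a0) * (p * (1 - r^2) * (1 - ρ)) := h3
          _ = p * ((1 - a0) * (1 - ρ)) * (1 - r^2) := by ring
      have e1 : (1 - a0^2) * (r * (1 - r^2)⁻¹) = ((1 - a0^2) * r) / (1 - r^2) := by
        rw [div_eq_mul_inv]; ring
      have hx1 : 1 - x = (1 - a0) * (1 - ρ) / (1 + a0 * ρ) := by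
        rw [hxdef, eq_div_iff hdenpos.ne', sub_mul, div_mul_cancel₀ _ hdenpos.ne']
        ring
      have e2 : p * (1 - x) = (p * ((1 - a0) * (1 - ρ))) / (1 + a0 * ρ) := by
        rw [hx1, mul_div_assoc]
        ring
      rw [e1, e2, div_le_div_iff₀ hr2 hdenpos]
      linarith [main]
    have hfinal : ‖f (z^m)‖ ^ p
        + (∑' n : ℕ, ‖a (2*n+1)‖ * r ^ (2*n+1)) ≤ 1 := by
      calc ‖f (z^m)‖ ^ p + (∑' n : ℕ, ‖a (2*n+1)‖ * r ^ (2*n+1))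
          ≤ (p * x + (1 - p)) + (1 - a0^2) * (r * (1 - r^2)⁻¹) := by
            apply add_le_add (hrp1.trans hrp2) hT
        _ ≤ (p * x + (1 - p)) + p * (1 - x) := by linarith
        _ = 1 := by ring
    exact hfinal
end

section
/- Let f(z) = Σ a_n z^n be analytic on 𝔻 with |f| ≤ 1, p ∈ (0,1], N and m positive integers. If r ∈ [0,1) satisfies 2 r^N (1 + N - N r)(1 + r^m) ≤ p (1 - r)^2 (1 - r^m), then for all |z| = r: |f(z^m)|^p + Σ_{n≥N} (n+1) |a_n| r^n ≤ 1. -/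
open Metric

open Complex Filter Topology
open scoped NNReal ENNReal

set_option maxHeartbeats 1000000

noncomputable def Complex.abs : AbsoluteValue ℂ ℝ where
  toFun z := ‖z‖
  map_mul' := norm_mul
  nonneg' := norm_nonneg
  eq_zero' _ := norm_eq_zero
  add_le' := norm_add_le

theorem Complex.norm_eq_abs (z : ℂ) : ‖z‖ = Complex.abs z := rfl
theorem Complex.abs.nonneg (z : ℂ) : 0 ≤ Complex.abs z := norm_nonneg z
theorem Complex.abs.pos {z : ℂ} (h : z ≠ 0) : 0 < Complex.abs z := norm_pos_iff.2 h
theorem Complex.abs.sum_le {ι : Type*} (s : Finset ι) (g : ι → ℂ) :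
    Complex.abs (∑ i ∈ s, g i) ≤ ∑ i ∈ s, Complex.abs (g i) := norm_sum_le s g
theorem Complex.abs_conj (z : ℂ) : Complex.abs ((starRingEnd ℂ) z) = Complex.abs z :=
  Complex.norm_conj z
theorem Complex.sq_abs (z : ℂ) : Complex.abs z ^ 2 = Complex.normSq z := Complex.sq_norm z
theorem Complex.abs_apply (z : ℂ) : Complex.abs z = Real.sqrt (Complex.normSq z) := by
  rw [← Complex.sq_abs, Real.sqrt_sq (Complex.abs.nonneg z)]
theorem Complex.abs_ofReal (x : ℝ) : Complex.abs (x : ℂ) = |x| :=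
  (Complex.norm_real x).trans (Real.norm_eq_abs x)
theorem Complex.abs_natCast (n : ℕ) : Complex.abs (n : ℂ) = n := Complex.norm_natCast n
theorem Complex.abs_exp_ofReal_mul_I (x : ℝ) : Complex.abs (Complex.exp (x * Complex.I)) = 1 :=
  Complex.norm_exp_ofReal_mul_I x
theorem Complex.abs_re_le_abs (z : ℂ) : |z.re| ≤ Complex.abs z := Complex.abs_re_le_norm z

lemma normSq_mobius_diff (c y : ℂ) :
    Complex.normSq (1 - (starRingEnd ℂ) c * y) - Complex.normSq (y - c)
      = (1 - Complex.normSq c) * (1 - Complex.normSq y) := by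
  simp only [Complex.normSq_sub, Complex.normSq_mul, Complex.normSq_conj, Complex.normSq_one]
  have h1 : ((1:ℂ) * (starRingEnd ℂ) ((starRingEnd ℂ) c * y)).re = ((starRingEnd ℂ) c * y).re := by
    simp [Complex.conj_re]
  have h2 : (y * (starRingEnd ℂ) c).re = ((starRingEnd ℂ) c * y).re := by ring_nf
  rw [h1, h2]; ring

lemma mobius_denom_ne (c y : ℂ) (h : Complex.abs c * Complex.abs y < 1) :
    (1 : ℂ) - (starRingEnd ℂ) c * y ≠ 0 := by
  intro he
  have : (starRingEnd ℂ) c * y = 1 := by linear_combination -he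
  have := congrArg Complex.abs this
  rw [map_mul, Complex.abs_conj, map_one] at this
  linarith

lemma mobius_abs_lt_one {c y : ℂ} (hc : Complex.abs c < 1) (hy : Complex.abs y < 1) :
    Complex.abs ((y - c) / (1 - (starRingEnd ℂ) c * y)) < 1 := by
  have hcy : Complex.abs c * Complex.abs y < 1 := by
    nlinarith [Complex.abs.nonneg c, Complex.abs.nonneg y]
  have hd := mobius_denom_ne c y hcy
  rw [map_div₀, div_lt_one (Complex.abs.pos hd)]
  have h1 : Complex.normSq (y - c) < Complex.normSq (1 - (starRingEnd ℂ) c * y) := by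
    have := normSq_mobius_diff c y
    have hc2 : Complex.normSq c < 1 := by
      rw [← Complex.sq_abs]; nlinarith [Complex.abs.nonneg c]
    have hy2 : Complex.normSq y < 1 := by
      rw [← Complex.sq_abs]; nlinarith [Complex.abs.nonneg y]
    nlinarith
  have := Real.sqrt_lt_sqrt (Complex.normSq_nonneg _) h1
  rwa [← Complex.abs_apply, ← Complex.abs_apply] at this

lemma mobius_invert {c y : ℂ} {ρ : ℝ} (hρ0 : 0 ≤ ρ) (hρ1 : ρ ≤ 1)
    (hc : Complex.abs c ≤ 1) (hy : Complex.abs y ≤ 1)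
    (h : Complex.abs (y - c) ≤ ρ * Complex.abs (1 - (starRingEnd ℂ) c * y)) :
    Complex.abs y * (1 + Complex.abs c * ρ) ≤ Complex.abs c + ρ := by
  set s := Complex.abs y with hs
  set cc := Complex.abs c with hcc
  have hs0 : 0 ≤ s := Complex.abs.nonneg y
  have hcc0 : 0 ≤ cc := Complex.abs.nonneg c
  set R : ℝ := ((starRingEnd ℂ) c * y).re with hR
  have hRle : |R| ≤ cc * s := by
    have := Complex.abs_re_le_abs ((starRingEnd ℂ) c * y)
    rwa [map_mul, Complex.abs_conj, ← hcc, ← hs] at this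
  have hsq : Complex.normSq (y - c) ≤ ρ ^ 2 * Complex.normSq (1 - (starRingEnd ℂ) c * y) := by
    have h2 := mul_self_le_mul_self (Complex.abs.nonneg (y - c)) h
    rw [← Complex.sq_abs, ← Complex.sq_abs]
    calc Complex.abs (y - c) ^ 2 = Complex.abs (y-c) * Complex.abs (y-c) := sq (Complex.abs (y-c)) ▸ by ring
    _ ≤ (ρ * Complex.abs (1 - (starRingEnd ℂ) c * y)) * (ρ * Complex.abs (1 - (starRingEnd ℂ) c * y)) := h2
    _ = ρ^2 * Complex.abs (1 - (starRingEnd ℂ) c * y)^2 := by ring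
  have e1 : Complex.normSq (y - c) = s^2 - 2*R + cc^2 := by
    rw [Complex.normSq_sub]
    have : (y * (starRingEnd ℂ) c).re = R := by rw [hR]; ring_nf
    rw [this, ← Complex.sq_abs, ← Complex.sq_abs, ← hs, ← hcc]; ring
  have e2 : Complex.normSq (1 - (starRingEnd ℂ) c * y) = 1 - 2*R + cc^2 * s^2 := by
    rw [Complex.normSq_sub]
    have h1 : ((1:ℂ) * (starRingEnd ℂ) ((starRingEnd ℂ) c * y)).re = R := by
      simp [hR, Complex.conj_re]
    rw [h1, Complex.normSq_one, Complex.normSq_mul, Complex.normSq_conj,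
      ← Complex.sq_abs, ← Complex.sq_abs, ← hs, ← hcc]; ring
  rw [e1, e2] at hsq
  have hRa : R ≤ cc * s := le_trans (le_abs_self R) hRle
  have hRb : -(cc*s) ≤ R := neg_le_of_abs_le hRle
  have key : ((1+ρ*cc)*s - (cc+ρ)) * ((1-ρ*cc)*s + (ρ-cc)) ≤ 0 := by
    nlinarith [mul_nonneg (by nlinarith : (0:ℝ) ≤ 1 - ρ^2) (by nlinarith : (0:ℝ) ≤ cc*s - R)]
  by_contra hP
  push_neg at hP
  have hQ : (1-ρ*cc)*s + (ρ-cc) ≤ 0 := by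
    by_contra hQ
    push_neg at hQ
    nlinarith [mul_pos (by nlinarith : (0:ℝ) < (1+ρ*cc)*s - (cc+ρ)) hQ]
  have hrc : ρ * cc ≤ 1 := by nlinarith
  rcases lt_or_eq_of_le hrc with h1 | h1
  · nlinarith [mul_le_mul_of_nonneg_left hQ (by nlinarith : (0:ℝ) ≤ 1+ρ*cc),
      mul_lt_mul_of_pos_left hP (by linarith : (0:ℝ) < 1-ρ*cc),
      mul_nonneg hρ0 (by nlinarith : (0:ℝ) ≤ 1 - cc^2)]
  · have hρ1' : ρ = 1 := by nlinarith
    have hcc1 : cc = 1 := by nlinarith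
    nlinarith

lemma schwarz_pick_value (f : ℂ → ℂ) (hf : DifferentiableOn ℂ f (ball 0 1))
    (hb : ∀ z ∈ ball (0:ℂ) 1, Complex.abs (f z) ≤ 1) {w : ℂ} (hw : w ∈ ball (0:ℂ) 1) :
    Complex.abs (f w) * (1 + Complex.abs (f 0) * Complex.abs w)
      ≤ Complex.abs (f 0) + Complex.abs w := by
  set A := Complex.abs (f 0) with hA
  have hA0 : 0 ≤ A := Complex.abs.nonneg _
  have hA1 : A ≤ 1 := hb 0 (by simp)
  have hwlt : Complex.abs w < 1 := mem_ball_zero_iff.1 hw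
  have hw0 : 0 ≤ Complex.abs w := Complex.abs.nonneg w
  have key : ∀ t ∈ Set.Ioo (0:ℝ) 1,
      (t * Complex.abs (f w)) * (1 + (t * A) * Complex.abs w) ≤ t * A + Complex.abs w := by
    intro t ht
    obtain ⟨ht0, ht1⟩ := ht
    set c : ℂ := (t:ℂ) * f 0 with hc
    have habs : ∀ z ∈ ball (0:ℂ) 1, Complex.abs ((t:ℂ) * f z) ≤ t := by
      intro z hz
      rw [map_mul, Complex.abs_ofReal, abs_of_pos ht0]
      nlinarith [hb z hz, Complex.abs.nonneg (f z)]
    have hclt : Complex.abs c < 1 := lt_of_le_of_lt (habs 0 (by simp)) ht1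
    have habslt : ∀ z ∈ ball (0:ℂ) 1, Complex.abs ((t:ℂ) * f z) < 1 :=
      fun z hz => lt_of_le_of_lt (habs z hz) ht1
    have hdne : ∀ z ∈ ball (0:ℂ) 1, (1:ℂ) - (starRingEnd ℂ) c * ((t:ℂ) * f z) ≠ 0 := by
      intro z hz
      refine mobius_denom_ne _ _ ?_
      nlinarith [habslt z hz, hclt, Complex.abs.nonneg c, Complex.abs.nonneg ((t:ℂ) * f z)]
    set h : ℂ → ℂ := fun z => ((t:ℂ) * f z - c) / (1 - (starRingEnd ℂ) c * ((t:ℂ) * f z))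
      with hh
    have hdiff : DifferentiableOn ℂ h (ball 0 1) := by
      apply DifferentiableOn.div
      · exact (hf.const_mul _).sub (differentiableOn_const _)
      · exact (differentiableOn_const _).sub ((hf.const_mul _).const_mul _)
      · exact hdne
    have h0 : h 0 = 0 := by simp [hh, hc]
    have hmaps : Set.MapsTo h (ball 0 1) (ball (h 0) 1) := by
      rw [h0]
      intro z hz
      rw [mem_ball_zero_iff]
      exact mobius_abs_lt_one hclt (habslt z hz)
    have hdist := Complex.dist_le_div_mul_dist_of_mapsTo_ball hdiff
      (hmaps.mono_right ball_subset_closedBall) hw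
    rw [h0, dist_zero_right, dist_zero_right, div_one, one_mul] at hdist
    have hnum : Complex.abs ((t:ℂ) * f w - c)
        ≤ Complex.abs w * Complex.abs (1 - (starRingEnd ℂ) c * ((t:ℂ) * f w)) := by
      have hd := hdne w hw
      rw [hh] at hdist
      simp only [Complex.norm_eq_abs, map_div₀] at hdist
      rw [div_le_iff₀ (Complex.abs.pos hd)] at hdist
      linarith [hdist]
    have hres := mobius_invert hw0 (le_of_lt hwlt) (le_of_lt hclt)
      (le_trans (habs w hw) (le_of_lt ht1)) hnum
    have e1 : Complex.abs ((t:ℂ) * f w) = t * Complex.abs (f w) := by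
      rw [map_mul, Complex.abs_ofReal, abs_of_pos ht0]
    have e2 : Complex.abs c = t * A := by
      rw [hc, map_mul, Complex.abs_ofReal, abs_of_pos ht0, hA]
    rw [e1, e2] at hres
    exact hres
  have hne : (𝓝[<] (1:ℝ)).NeBot := inferInstance
  have hev : ∀ᶠ t in 𝓝[<] (1:ℝ),
      (t * Complex.abs (f w)) * (1 + (t * A) * Complex.abs w) ≤ t * A + Complex.abs w := by
    filter_upwards [Ioo_mem_nhdsLT_of_mem (Set.mem_Ioc.2 ⟨zero_lt_one, le_refl 1⟩)] with t ht
    exact key t ht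
  have h1 : Tendsto (fun t : ℝ => (t * Complex.abs (f w)) * (1 + (t * A) * Complex.abs w))
      (𝓝[<] (1:ℝ)) (𝓝 (Complex.abs (f w) * (1 + A * Complex.abs w))) := by
    have : Continuous fun t : ℝ => (t * Complex.abs (f w)) * (1 + (t * A) * Complex.abs w) := by
      fun_prop
    have h := (this.continuousAt (x := (1:ℝ))).tendsto.mono_left
      (nhdsWithin_le_nhds (s := Set.Iio 1))
    simpa using h
  have h2 : Tendsto (fun t : ℝ => t * A + Complex.abs w)
      (𝓝[<] (1:ℝ)) (𝓝 (A + Complex.abs w)) := by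
    have : Continuous fun t : ℝ => t * A + Complex.abs w := by fun_prop
    have h := (this.continuousAt (x := (1:ℝ))).tendsto.mono_left
      (nhdsWithin_le_nhds (s := Set.Iio 1))
    simpa using h
  exact le_of_tendsto_of_tendsto h1 h2 hev

lemma rotation_hasSum (a : ℕ → ℂ) (f : ℂ → ℂ)
    (hsum : ∀ z ∈ ball (0:ℂ) 1, HasSum (fun k : ℕ => a k * z ^ k) (f z))
    (n : ℕ) (hn : 0 < n) {z : ℂ} (hz : z ∈ ball (0:ℂ) 1) :
    HasSum (fun j : ℕ => a (n*j) * (z^n)^j)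
      ((n:ℂ)⁻¹ * ∑ k ∈ Finset.range n,
        f (Complex.exp (2*Real.pi*Complex.I/n)^k * z)) := by
  set ζ : ℂ := Complex.exp (2*Real.pi*Complex.I/n) with hζ
  have hnne : (n:ℂ) ≠ 0 := Nat.cast_ne_zero.2 hn.ne'
  have prim : IsPrimitiveRoot ζ n := Complex.isPrimitiveRoot_exp n hn.ne'
  have hζn : ζ ^ n = 1 := prim.pow_eq_one
  have hζabs : Complex.abs ζ = 1 := by
    have : (2*Real.pi*Complex.I/n) = ((2*Real.pi/n : ℝ) : ℂ) * Complex.I := by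
      push_cast; ring
    rw [hζ, this, Complex.abs_exp_ofReal_mul_I]
  have hmem : ∀ k : ℕ, ζ^k * z ∈ ball (0:ℂ) 1 := by
    intro k
    rw [mem_ball_zero_iff] at hz ⊢
    rw [norm_mul, norm_pow, Complex.norm_eq_abs, hζabs, one_pow, one_mul]
    exact hz
  have H1 : HasSum (fun mi : ℕ => ∑ k ∈ Finset.range n, a mi * (ζ^k*z)^mi)
      (∑ k ∈ Finset.range n, f (ζ^k*z)) :=
    hasSum_sum (fun k _ => hsum _ (hmem k))
  have geom : ∀ mi : ℕ, (∑ k ∈ Finset.range n, (ζ^mi)^k) = if n ∣ mi then (n:ℂ) else 0 := by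
    intro mi
    by_cases hd : n ∣ mi
    · rw [if_pos hd]
      have : ζ ^ mi = 1 := (prim.pow_eq_one_iff_dvd mi).2 hd
      simp [this]
    · rw [if_neg hd]
      have hne1 : ζ ^ mi ≠ 1 := fun h => hd ((prim.pow_eq_one_iff_dvd mi).1 h)
      rw [geom_sum_eq hne1]
      have : (ζ ^ mi) ^ n = 1 := by
        rw [← pow_mul, mul_comm, pow_mul, hζn, one_pow]
      rw [this, sub_self, zero_div]
  have e1 : (fun mi : ℕ => ∑ k ∈ Finset.range n, a mi * (ζ^k*z)^mi)
      = fun mi : ℕ => if n ∣ mi then (n:ℂ) * (a mi * z^mi) else 0 := by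
    funext mi
    have : ∀ k, a mi * (ζ^k*z)^mi = (a mi * z^mi) * (ζ^mi)^k := by
      intro k; rw [mul_pow, ← pow_mul, mul_comm k mi, pow_mul]; ring
    simp only [this]
    rw [← Finset.mul_sum, geom mi]
    by_cases hd : n ∣ mi <;> simp [hd] <;> ring
  rw [e1] at H1
  have H2 := H1.mul_left ((n:ℂ)⁻¹)
  have e2 : (fun mi : ℕ => (n:ℂ)⁻¹ * (if n ∣ mi then (n:ℂ) * (a mi * z^mi) else 0))
      = fun mi : ℕ => if n ∣ mi then a mi * z^mi else 0 := by
    funext mi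
    by_cases hd : n ∣ mi <;> simp [hd]
    rw [← mul_assoc, inv_mul_cancel₀ hnne, one_mul]
  rw [e2] at H2
  have hinj : Function.Injective (fun j : ℕ => n * j) := fun x y h => by
    simpa [Nat.mul_left_cancel_iff hn] using h
  have hzero : ∀ mi ∉ Set.range (fun j : ℕ => n * j),
      (if n ∣ mi then a mi * z^mi else 0) = 0 := by
    intro mi hmi
    rw [if_neg]
    intro hd
    exact hmi ⟨mi / n, (Nat.mul_div_cancel' hd)⟩
  have H3 := (Function.Injective.hasSum_iff hinj hzero).2 H2
  have e3 : ((fun mi : ℕ => if n ∣ mi then a mi * z^mi else 0) ∘ (fun j : ℕ => n * j))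
      = fun j : ℕ => a (n*j) * (z^n)^j := by
    funext j
    simp only [Function.comp_apply, if_pos (Dvd.intro j rfl)]
    rw [← pow_mul]
  rwa [e3] at H3

lemma wiener_bound (f : ℂ → ℂ) (a : ℕ → ℂ)
    (hb : ∀ z ∈ ball (0:ℂ) 1, Complex.abs (f z) ≤ 1)
    (hsum : ∀ z ∈ ball (0:ℂ) 1, HasSum (fun k : ℕ => a k * z ^ k) (f z))
    (n : ℕ) (hn : 0 < n) :
    Complex.abs (a n) ≤ 1 - Complex.abs (a 0) ^ 2 := by
  classical
  set b : ℕ → ℂ := fun j => a (n * j) with hbdef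
  set g : ℂ → ℂ := fun w => ∑' j : ℕ, b j * w ^ j with hgdef
  -- HasSum and bound for g
  have hg : ∀ w ∈ ball (0:ℂ) 1, HasSum (fun j : ℕ => b j * w^j) (g w)
      ∧ Complex.abs (g w) ≤ 1 := by
    intro w hw
    have hwlt : Complex.abs w < 1 := mem_ball_zero_iff.1 hw
    obtain ⟨z, hzn, hzb⟩ : ∃ z : ℂ, z ^ n = w ∧ z ∈ ball (0:ℂ) 1 := by
      by_cases hw0 : w = 0
      · exact ⟨0, by rw [hw0, zero_pow hn.ne'], by simp⟩
      · refine ⟨w ^ ((n:ℂ)⁻¹), Complex.cpow_nat_inv_pow w hn.ne', ?_⟩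
        rw [mem_ball_zero_iff]
        by_contra hge
        push_neg at hge
        have : (1:ℝ) ≤ ‖w ^ ((n:ℂ)⁻¹)‖ ^ n := one_le_pow₀ hge
        rw [← norm_pow, Complex.cpow_nat_inv_pow w hn.ne'] at this
        rw [mem_ball_zero_iff] at hw
        linarith
    have H := rotation_hasSum a f hsum n hn hzb
    rw [hzn] at H
    have habs : Complex.abs ((n:ℂ)⁻¹ * ∑ k ∈ Finset.range n,
        f (Complex.exp (2*Real.pi*Complex.I/n)^k * z)) ≤ 1 := by
      rw [map_mul, map_inv₀, Complex.abs_natCast]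
      have hsumabs : Complex.abs (∑ k ∈ Finset.range n,
          f (Complex.exp (2*Real.pi*Complex.I/n)^k * z)) ≤ (n:ℝ) := by
        refine le_trans (Complex.abs.sum_le _ _) ?_
        have : ∀ k ∈ Finset.range n,
            Complex.abs (f (Complex.exp (2*Real.pi*Complex.I/n)^k * z)) ≤ 1 := by
          intro k _
          apply hb
          rw [mem_ball_zero_iff] at hzb ⊢
          have : (2*Real.pi*Complex.I/n) = ((2*Real.pi/n : ℝ) : ℂ) * Complex.I := by
            push_cast; ring
          rw [norm_mul, norm_pow, Complex.norm_eq_abs, this,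
            Complex.abs_exp_ofReal_mul_I, one_pow, one_mul]
          exact hzb
        calc (∑ k ∈ Finset.range n,
              Complex.abs (f (Complex.exp (2*Real.pi*Complex.I/n)^k * z)))
            ≤ ∑ k ∈ Finset.range n, (1:ℝ) := Finset.sum_le_sum this
        _ = (n:ℝ) := by simp
      rcases Nat.eq_zero_or_pos n with h0 | _
      · omega
      · rw [inv_mul_le_iff₀ (by exact_mod_cast hn), mul_one]
        exact hsumabs
    have hgw : g w = (n:ℂ)⁻¹ * ∑ k ∈ Finset.range n,
        f (Complex.exp (2*Real.pi*Complex.I/n)^k * z) := H.tsum_eq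
    exact ⟨hgw ▸ H, hgw ▸ habs⟩
  -- power series for g
  set q : FormalMultilinearSeries ℂ ℂ ℂ := FormalMultilinearSeries.ofScalars ℂ b with hqdef
  have hqball : ∀ ρ : ℝ, 0 < ρ → ρ < 1 → HasFPowerSeriesOnBall g q 0 (ENNReal.ofReal ρ) := by
    intro ρ hρ0 hρ1
    have hsummable : Summable (fun j : ℕ => ‖q j‖ * ρ ^ j) := by
      have h1 := (hg (ρ:ℂ) (by rw [mem_ball_zero_iff]; simpa [abs_of_pos hρ0] using hρ1)).1
      have h2 : Summable (fun j : ℕ => ‖b j * (ρ:ℂ)^j‖) :=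
        (summable_norm_iff.2 h1.summable)
      refine Summable.of_nonneg_of_le (fun j => by positivity) (fun j => ?_) h2
      rw [norm_mul, norm_pow, Complex.norm_real, Real.norm_eq_abs, abs_of_pos hρ0]
      have := FormalMultilinearSeries.ofScalars_norm (𝕜 := ℂ) (E := ℂ) (c := b) (n := j)
      rw [hqdef, this]
    constructor
    · have heq : ((Real.toNNReal ρ : ℝ≥0) : ℝ≥0∞) = ENNReal.ofReal ρ := rfl
      rw [← heq]
      apply q.le_radius_of_summable_norm
      have hco : ((Real.toNNReal ρ : ℝ≥0) : ℝ) = ρ := Real.coe_toNNReal ρ hρ0.le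
      simpa [hco] using hsummable
    · exact ENNReal.ofReal_pos.2 hρ0
    · intro y hy
      rw [Metric.emetric_ball] at hy
      have hy1 : y ∈ ball (0:ℂ) 1 := by
        rw [mem_ball_zero_iff] at hy ⊢; linarith
      have := (hg y hy1).1
      have e : (fun j : ℕ => q j fun _ => y) = fun j : ℕ => b j * y ^ j := by
        funext j
        rw [hqdef, FormalMultilinearSeries.ofScalars_apply_eq]
        simp [smul_eq_mul, mul_comm]
      rw [zero_add, e]
      exact this
  have hqat : HasFPowerSeriesAt g q 0 :=
    ⟨ENNReal.ofReal (1/2), hqball (1/2) (by norm_num) (by norm_num)⟩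
  have hgderiv : HasDerivAt g (b 1) 0 := by
    have h := hqat.hasDerivAt
    have e : (q 1 fun _ => (1:ℂ)) = b 1 := by
      rw [hqdef, FormalMultilinearSeries.ofScalars_apply_eq]
      simp
    rwa [e] at h
  have hgdiff : DifferentiableOn ℂ g (ball 0 1) := by
    intro w hw
    have hwlt : Complex.abs w < 1 := mem_ball_zero_iff.1 hw
    set ρ : ℝ := (Complex.abs w + 1)/2 with hρ
    have hρ0 : 0 < ρ := by positivity
    have hρ1 : ρ < 1 := by
      rw [hρ]; nlinarith
    have hwin : w ∈ Metric.eball (0:ℂ) (ENNReal.ofReal ρ) := by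
      rw [Metric.emetric_ball, mem_ball_zero_iff]
      rw [hρ]
      have : Complex.abs w = ‖w‖ := rfl
      linarith [this ▸ hwlt]
    exact (((hqball ρ hρ0 hρ1).analyticAt_of_mem hwin).differentiableAt).differentiableWithinAt
  have hg0 : g 0 = a 0 := by
    have h1 := (hg 0 (by simp)).1
    have h2 : HasSum (fun j : ℕ => b j * (0:ℂ)^j) (b 0) := by
      have := hasSum_single (f := fun j : ℕ => b j * (0:ℂ)^j) 0
        (by intro j hj; simp [zero_pow hj])
      simpa using this
    have := h1.unique h2
    rw [this, hbdef]; simp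
  have hga : ∀ w ∈ ball (0:ℂ) 1, Complex.abs (g w) ≤ 1 := fun w hw => (hg w hw).2
  -- Möbius + Schwarz
  set A := Complex.abs (a 0) with hA
  have hA0 : 0 ≤ A := Complex.abs.nonneg _
  have hA1 : A ≤ 1 := by
    have := hga 0 (by simp)
    rwa [hg0] at this
  have key : ∀ t ∈ Set.Ioo (0:ℝ) 1, t * Complex.abs (b 1) ≤ 1 - t^2 * A^2 := by
    intro t ⟨ht0, ht1⟩
    set c : ℂ := (t:ℂ) * g 0 with hc
    have hcabs : Complex.abs c = t * A := by
      rw [hc, map_mul, Complex.abs_ofReal, abs_of_pos ht0, hg0, hA]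
    have hclt : Complex.abs c < 1 := by rw [hcabs]; nlinarith
    have habs : ∀ z ∈ ball (0:ℂ) 1, Complex.abs ((t:ℂ) * g z) ≤ t := by
      intro z hz
      rw [map_mul, Complex.abs_ofReal, abs_of_pos ht0]
      nlinarith [hga z hz, Complex.abs.nonneg (g z)]
    have habslt : ∀ z ∈ ball (0:ℂ) 1, Complex.abs ((t:ℂ) * g z) < 1 :=
      fun z hz => lt_of_le_of_lt (habs z hz) ht1
    have hdne : ∀ z ∈ ball (0:ℂ) 1, (1:ℂ) - (starRingEnd ℂ) c * ((t:ℂ) * g z) ≠ 0 := by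
      intro z hz
      refine mobius_denom_ne _ _ ?_
      nlinarith [habslt z hz, hclt, Complex.abs.nonneg c,
        Complex.abs.nonneg ((t:ℂ) * g z)]
    set h : ℂ → ℂ := fun z => ((t:ℂ) * g z - c) / (1 - (starRingEnd ℂ) c * ((t:ℂ) * g z))
      with hh
    have hdiff : DifferentiableOn ℂ h (ball 0 1) := by
      apply DifferentiableOn.div
      · exact (hgdiff.const_mul _).sub (differentiableOn_const _)
      · exact (differentiableOn_const _).sub ((hgdiff.const_mul _).const_mul _)
      · exact hdne
    have h0 : h 0 = 0 := by simp [hh, hc]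
    have hmaps : Set.MapsTo h (ball 0 1) (ball (h 0) 1) := by
      rw [h0]
      intro z hz
      rw [mem_ball_zero_iff]
      exact mobius_abs_lt_one hclt (habslt z hz)
    have hschwarz : Complex.abs (deriv h 0) ≤ 1 / 1 :=
        Complex.norm_deriv_le_div_of_mapsTo_ball hdiff
          (hmaps.mono_right ball_subset_closedBall) one_pos
    rw [div_one] at hschwarz
    -- compute deriv h 0
    have hnum : HasDerivAt (fun z => (t:ℂ) * g z - c) ((t:ℂ) * b 1) 0 :=
      (hgderiv.const_mul ((t:ℂ))).sub_const c
    have hden : HasDerivAt (fun z => (1:ℂ) - (starRingEnd ℂ) c * ((t:ℂ) * g z))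
        (-((starRingEnd ℂ) c * ((t:ℂ) * b 1))) 0 :=
      ((hgderiv.const_mul ((t:ℂ))).const_mul ((starRingEnd ℂ) c)).const_sub 1
    have hd0 : (1:ℂ) - (starRingEnd ℂ) c * ((t:ℂ) * g 0) ≠ 0 := hdne 0 (by simp)
    have hD := hnum.div hden hd0
    have hderiv0 : deriv h 0 = ((t:ℂ) * b 1 * (1 - (starRingEnd ℂ) c * ((t:ℂ) * g 0))
        - ((t:ℂ) * g 0 - c) * -((starRingEnd ℂ) c * ((t:ℂ) * b 1)))
        / (1 - (starRingEnd ℂ) c * ((t:ℂ) * g 0))^2 := hD.deriv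
    have hc0 : (t:ℂ) * g 0 = c := hc.symm
    have htA : t * A < 1 := by nlinarith
    have hud : (1:ℂ) - (starRingEnd ℂ) c * c = ((1 - (t*A)^2 : ℝ) : ℂ) := by
      have h1 : (starRingEnd ℂ) c * c = ((Complex.abs c ^ 2 : ℝ) : ℂ) := by
        rw [mul_comm, Complex.mul_conj, Complex.sq_abs]
      rw [h1, hcabs]
      push_cast
      ring
    have hpos : (0:ℝ) < 1 - (t*A)^2 := by nlinarith [mul_nonneg ht0.le hA0]
    have hune : (1:ℂ) - (starRingEnd ℂ) c * c ≠ 0 := by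
      rw [hud]
      exact_mod_cast Complex.ofReal_ne_zero.2 (ne_of_gt hpos)
    have e : deriv h 0 = (t:ℂ) * b 1 / (1 - (starRingEnd ℂ) c * c) := by
      rw [hderiv0, hc0]
      field_simp
      ring
    have habsd : Complex.abs (deriv h 0) = t * Complex.abs (b 1) / (1 - (t*A)^2) := by
      rw [e, map_div₀, hud, map_mul, Complex.abs_ofReal, Complex.abs_ofReal,
        abs_of_pos ht0, abs_of_pos hpos]
    rw [habsd, div_le_one hpos] at hschwarz
    nlinarith [hschwarz]
  -- limit t → 1
  have hblim : Complex.abs (b 1) ≤ 1 - A^2 := by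
    have hev : ∀ᶠ t in 𝓝[<] (1:ℝ), t * Complex.abs (b 1) ≤ 1 - t^2 * A^2 := by
      filter_upwards [Ioo_mem_nhdsLT_of_mem (Set.mem_Ioc.2 ⟨zero_lt_one, le_refl 1⟩)] with t ht
      exact key t ht
    have h1 : Tendsto (fun t : ℝ => t * Complex.abs (b 1)) (𝓝[<] (1:ℝ))
        (𝓝 (Complex.abs (b 1))) := by
      have hcont : Continuous fun t : ℝ => t * Complex.abs (b 1) := by fun_prop
      have h := (hcont.continuousAt (x := (1:ℝ))).tendsto.mono_left
        (nhdsWithin_le_nhds (s := Set.Iio 1))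
      simpa using h
    have h2 : Tendsto (fun t : ℝ => 1 - t^2 * A^2) (𝓝[<] (1:ℝ)) (𝓝 (1 - A^2)) := by
      have hcont : Continuous fun t : ℝ => 1 - t^2 * A^2 := by fun_prop
      have h := (hcont.continuousAt (x := (1:ℝ))).tendsto.mono_left
        (nhdsWithin_le_nhds (s := Set.Iio 1))
      simpa using h
    exact le_of_tendsto_of_tendsto h1 h2 hev
  have : b 1 = a n := by rw [hbdef]; simp
  rwa [this] at hblim

theorem bohr_rogosinski_weighted_tail
    (f : ℂ → ℂ) (a : ℕ → ℂ) (p : ℝ) (N m : ℕ) (r : ℝ)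
    (hf : DifferentiableOn ℂ f (ball (0:ℂ) 1))
    (hb : ∀ z ∈ ball (0:ℂ) 1, ‖f z‖ ≤ 1)
    (hsum : ∀ z ∈ ball (0:ℂ) 1, HasSum (fun n : ℕ => a n * z ^ n) (f z))
    (hp : p ∈ Set.Ioc (0:ℝ) 1) (hN : 0 < N) (hm : 0 < m)
    (hr : r ∈ Set.Ico (0:ℝ) 1)
    (hcond : 2 * r ^ N * (1 + N - N * r) * (1 + r ^ m)
        ≤ p * (1 - r) ^ 2 * (1 - r ^ m)) :
    ∀ z : ℂ, ‖z‖ = r →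
      ‖f (z ^ m)‖ ^ p
        + ∑' n : ℕ, ((N + n + 1 : ℕ) : ℝ) * ‖a (N + n)‖ * r ^ (N + n)
        ≤ 1 := by
  simp only [Complex.norm_eq_abs] at hb ⊢
  obtain ⟨hp0, hp1⟩ := hp
  obtain ⟨hr0, hr1⟩ := hr
  intro z hz
  set ρ : ℝ := r ^ m with hρdef
  have hρ0 : 0 ≤ ρ := pow_nonneg hr0 m
  have hρ1 : ρ < 1 := pow_lt_one₀ hr0 hr1 hm.ne'
  have hwball : z ^ m ∈ ball (0:ℂ) 1 := by
    rw [mem_ball_zero_iff, norm_pow, Complex.norm_eq_abs, hz]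
    exact hρ1
  have hwabs : Complex.abs (z ^ m) = ρ := by rw [map_pow, hz]
  -- a 0 = f 0
  have ha0 : a 0 = f 0 := by
    have h1 := hsum 0 (by simp)
    have h2 : HasSum (fun k : ℕ => a k * (0:ℂ)^k) (a 0) := by
      have := hasSum_single (f := fun k : ℕ => a k * (0:ℂ)^k) 0
        (by intro k hk; simp [zero_pow hk])
      simpa using this
    exact (h2.unique h1)
  set A := Complex.abs (f 0) with hA
  have hA0 : 0 ≤ A := Complex.abs.nonneg _
  have hA1 : A ≤ 1 := hb 0 (by simp)
  set x := Complex.abs (f (z ^ m)) with hx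
  have hx0 : 0 ≤ x := Complex.abs.nonneg _
  have hx1 : x ≤ 1 := hb _ hwball
  -- Bernoulli
  have hxp : x ^ p ≤ 1 + p * (x - 1) := by
    have h := rpow_one_add_le_one_add_mul_self (s := x - 1) (by linarith) hp0.le hp1
    simpa using h
  -- Schwarz-Pick
  have hSP : x * (1 + A * ρ) ≤ A + ρ := by
    have := schwarz_pick_value f hf hb hwball
    rwa [hwabs, ← hA, ← hx] at this
  -- Wiener bounds
  have hW : ∀ n : ℕ, Complex.abs (a (N + n)) ≤ 1 - A ^ 2 := by
    intro n
    have := wiener_bound f a hb hsum (N + n) (by omega)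
    rwa [ha0, ← hA] at this
  have h1A : 0 ≤ 1 - A ^ 2 := by nlinarith
  -- the comparison sum
  set S : ℝ := ∑' n : ℕ, ((N + n + 1 : ℕ) : ℝ) * r ^ (N + n) with hSdef
  have hterm : ∀ n : ℕ, ((N + n + 1 : ℕ) : ℝ) * r ^ (N + n)
      = (r^N * ((N:ℝ)+1)) * r^n + r^N * ((n:ℝ) * r^n) := by
    intro n
    rw [pow_add]
    push_cast
    ring
  have hrn : ‖r‖ < 1 := by rwa [Real.norm_eq_abs, _root_.abs_of_nonneg hr0]
  have hs1 : Summable (fun n : ℕ => (r^N * ((N:ℝ)+1)) * r^n) :=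
    (summable_geometric_of_lt_one hr0 hr1).mul_left _
  have hs2 : Summable (fun n : ℕ => r^N * ((n:ℝ) * r^n)) := by
    apply Summable.mul_left
    have := summable_pow_mul_geometric_of_norm_lt_one (R := ℝ) 1 hrn
    simpa using this
  have hsumS : Summable (fun n : ℕ => ((N + n + 1 : ℕ) : ℝ) * r ^ (N + n)) := by
    apply Summable.congr (hs1.add hs2)
    intro n
    rw [hterm n]
  have hSval : S = r^N * (1 + (N:ℝ) - N*r) / (1-r)^2 := by
    rw [hSdef, tsum_congr hterm, Summable.tsum_add hs1 hs2, tsum_mul_left, tsum_mul_left,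
      tsum_geometric_of_lt_one hr0 hr1, tsum_coe_mul_geometric_of_norm_lt_one hrn]
    have h1r : (1:ℝ) - r ≠ 0 := by linarith
    field_simp
    ring
  have hS0 : 0 ≤ S := tsum_nonneg (fun n => by positivity)
  -- tail bound
  set T : ℝ := ∑' n : ℕ, ((N + n + 1 : ℕ) : ℝ) * Complex.abs (a (N + n)) * r ^ (N + n)
    with hTdef
  have hsummT : Summable (fun n : ℕ =>
      ((N + n + 1 : ℕ) : ℝ) * Complex.abs (a (N + n)) * r ^ (N + n)) := by
    refine Summable.of_nonneg_of_le (fun n => by positivity) (fun n => ?_) hsumS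
    have h1 : Complex.abs (a (N + n)) ≤ 1 := by
      have := hW n; nlinarith [hW n]
    calc ((N + n + 1 : ℕ) : ℝ) * Complex.abs (a (N + n)) * r ^ (N + n)
        ≤ ((N + n + 1 : ℕ) : ℝ) * 1 * r ^ (N + n) := by
          apply mul_le_mul_of_nonneg_right _ (by positivity)
          apply mul_le_mul_of_nonneg_left h1 (by positivity)
      _ = ((N + n + 1 : ℕ) : ℝ) * r ^ (N + n) := by ring
  have hTle : T ≤ (1 - A^2) * S := by
    rw [hTdef, ← tsum_mul_left]
    refine Summable.tsum_le_tsum (fun n => ?_) hsummT (hsumS.mul_left _)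
    calc ((N + n + 1 : ℕ) : ℝ) * Complex.abs (a (N + n)) * r ^ (N + n)
        ≤ ((N + n + 1 : ℕ) : ℝ) * (1 - A^2) * r ^ (N + n) := by
          apply mul_le_mul_of_nonneg_right _ (by positivity)
          exact mul_le_mul_of_nonneg_left (hW n) (by positivity)
      _ = (1 - A^2) * (((N + n + 1 : ℕ) : ℝ) * r ^ (N + n)) := by ring
  -- final arithmetic
  have h2S : 2 * S * (1 + ρ) ≤ p * (1 - ρ) := by
    have hr2 : (0:ℝ) < (1-r)^2 := pow_pos (by linarith) 2
    have hSmul : S * (1-r)^2 = r^N * (1 + (N:ℝ) - N*r) := by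
      rw [hSval]; field_simp
    rw [← mul_le_mul_iff_of_pos_right hr2]
    calc 2 * S * (1 + ρ) * (1-r)^2 = 2 * (S * (1-r)^2) * (1+ρ) := by ring
      _ = 2 * (r^N * (1 + (N:ℝ) - N*r)) * (1+ρ) := by rw [hSmul]
      _ ≤ p * (1-r)^2 * (1-ρ) := by
          calc 2 * (r^N * (1 + (N:ℝ) - N*r)) * (1+ρ)
              = 2 * r^N * (1 + (N:ℝ) - N*r) * (1+ρ) := by ring
            _ ≤ p * (1-r)^2 * (1-ρ) := hcond
      _ = p * (1-ρ) * (1-r)^2 := by ring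
  have hq1 : (1+A) * (1+A*ρ) ≤ 2 * (1+ρ) := by nlinarith
  have hstepc : (1-A) * (1-ρ) ≤ (1-x) * (1+A*ρ) := by nlinarith
  have hfin : T ≤ p * (1 - x) := by
    have hpos : (0:ℝ) < 1 + A*ρ := by positivity
    rw [← mul_le_mul_iff_of_pos_right hpos]
    calc T * (1+A*ρ) ≤ ((1-A^2) * S) * (1+A*ρ) := by
          apply mul_le_mul_of_nonneg_right hTle (le_of_lt hpos)
      _ = ((1-A) * S) * ((1+A) * (1+A*ρ)) := by ring
      _ ≤ ((1-A) * S) * (2 * (1+ρ)) := by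
          apply mul_le_mul_of_nonneg_left hq1
          exact mul_nonneg (by linarith) hS0
      _ = (1-A) * (2 * S * (1+ρ)) := by ring
      _ ≤ (1-A) * (p * (1-ρ)) := by
          apply mul_le_mul_of_nonneg_left h2S (by linarith)
      _ = p * ((1-A) * (1-ρ)) := by ring
      _ ≤ p * ((1-x) * (1+A*ρ)) := by
          apply mul_le_mul_of_nonneg_left hstepc (le_of_lt hp0)
      _ = p * (1-x) * (1+A*ρ) := by ring
  calc x ^ p + T ≤ (1 + p * (x - 1)) + p * (1 - x) := add_le_add hxp hfin
    _ = 1 := by ring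
end

section
/- Let (λ_k)_{k≥1} be nonnegative continuous functions on [0,1) with Σ λ_k(r) locally uniformly convergent, m a positive integer, f a convex univalent analytic function on 𝔻 with Ω = f(𝔻), and g(z) = Σ b_k z^k subordinate to f. If r ∈ [0,1) satisfies Σ_{k≥1} λ_k(r) + r^m/(1-r^m) ≤ 1/2, then for all |z| = r: |g(z^m)| + Σ_{k≥1} |b_k|·λ_k(r) ≤ |f(0)| + dist(f(0), ∂Ω). -/
open Metric Filter Set Complex Topology Bornology

private lemma normSq_identity (a b : ℂ) :
    Complex.normSq (1 - (starRingEnd ℂ) b * a) - Complex.normSq (a - b)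
      = (1 - Complex.normSq a) * (1 - Complex.normSq b) := by
  simp only [Complex.normSq_apply, Complex.sub_re, Complex.sub_im, Complex.mul_re,
    Complex.mul_im, Complex.conj_re, Complex.conj_im, Complex.one_re, Complex.one_im]
  ring

private lemma normSq_pm (w : ℂ) :
    Complex.normSq (1 - w) - Complex.normSq (1 + w) = -(4 * w.re) := by
  simp only [Complex.normSq_apply, Complex.sub_re, Complex.sub_im, Complex.add_re,
    Complex.add_im, Complex.one_re, Complex.one_im]
  ring

private lemma norm_sq_eq' (z : ℂ) : ‖z‖ ^ 2 = Complex.normSq z := by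
  rw [Complex.sq_norm]

/-- Schwarz–Pick at the origin. -/
private lemma schwarzPick0 {G : ℂ → ℂ} (hd : DifferentiableOn ℂ G (ball 0 1))
    (hmap : Set.MapsTo G (ball 0 1) (ball 0 1)) :
    ‖deriv G 0‖ ≤ 1 - ‖G 0‖ ^ 2 := by
  have h0 : (0:ℂ) ∈ ball (0:ℂ) 1 := mem_ball_self one_pos
  set b := G 0 with hbdef
  have hb : ‖b‖ < 1 := by simpa [mem_ball, dist_eq_norm] using hmap h0
  have hnorm : ∀ z ∈ ball (0:ℂ) 1, ‖G z‖ < 1 := by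
    intro z hz; simpa [mem_ball, dist_eq_norm] using hmap hz
  have hb2 : Complex.normSq b < 1 := by
    rw [← norm_sq_eq']; exact pow_lt_one₀ (norm_nonneg _) hb (by norm_num)
  have hden : ∀ z ∈ ball (0:ℂ) 1, 1 - (starRingEnd ℂ) b * G z ≠ 0 := by
    intro z hz h
    have h1 : (starRingEnd ℂ) b * G z = 1 := by linear_combination -h
    have h2 : ‖(starRingEnd ℂ) b * G z‖ < 1 := by
      rw [norm_mul, RCLike.norm_conj]
      calc ‖b‖ * ‖G z‖ ≤ 1 * ‖G z‖ :=
            mul_le_mul_of_nonneg_right hb.le (norm_nonneg _)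
        _ < 1 := by simpa using hnorm z hz
    rw [h1] at h2; simp at h2
  set H : ℂ → ℂ := fun z => (G z - b) / (1 - (starRingEnd ℂ) b * G z) with hH
  have hHd : DifferentiableOn ℂ H (ball 0 1) := by
    apply DifferentiableOn.div
    · exact hd.sub (differentiableOn_const _)
    · exact (differentiableOn_const _).sub ((differentiableOn_const _).mul hd)
    · exact hden
  have hkey : ∀ z ∈ ball (0:ℂ) 1, ‖G z - b‖ < ‖1 - (starRingEnd ℂ) b * G z‖ := by
    intro z hz
    have e1 : Complex.normSq (G z) < 1 := by
      rw [← norm_sq_eq']; exact pow_lt_one₀ (norm_nonneg _) (hnorm z hz) (by norm_num)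
    have h2 : ‖G z - b‖ ^ 2 < ‖1 - (starRingEnd ℂ) b * G z‖ ^ 2 := by
      rw [norm_sq_eq', norm_sq_eq']
      nlinarith [normSq_identity (G z) b]
    exact lt_of_pow_lt_pow_left₀ 2 (norm_nonneg _) h2
  have hHmap : Set.MapsTo H (ball 0 1) (ball 0 1) := by
    intro z hz
    rw [mem_ball, dist_zero_right, hH]
    have hpos : 0 < ‖1 - (starRingEnd ℂ) b * G z‖ := norm_pos_iff.2 (hden z hz)
    rw [norm_div, div_lt_one hpos]
    exact hkey z hz
  have hH0 : H 0 = 0 := by simp [hH, ← hbdef]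
  have hschwarz : ‖deriv H 0‖ ≤ 1 := by
    have := Complex.norm_deriv_le_div_of_mapsTo_ball hHd (by rw [hH0]; exact hHmap.mono_right ball_subset_closedBall) one_pos
    simpa using this
  -- compute deriv H 0
  have hGd : HasDerivAt G (deriv G 0) 0 :=
    (hd.differentiableAt (isOpen_ball.mem_nhds h0)).hasDerivAt
  have hu : HasDerivAt (fun z => G z - b) (deriv G 0) 0 := hGd.sub_const b
  have hv : HasDerivAt (fun z => 1 - (starRingEnd ℂ) b * G z)
      (-((starRingEnd ℂ) b * deriv G 0)) 0 := by
    simpa using ((hGd.const_mul ((starRingEnd ℂ) b)).const_sub 1)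
  have hv0 : (1 : ℂ) - (starRingEnd ℂ) b * G 0 ≠ 0 := hden 0 h0
  have hHderiv : HasDerivAt H
      ((deriv G 0 * (1 - (starRingEnd ℂ) b * G 0) -
        (G 0 - b) * -((starRingEnd ℂ) b * deriv G 0)) / (1 - (starRingEnd ℂ) b * G 0) ^ 2) 0 :=
    hu.div hv hv0
  have hsub : G 0 - b = 0 := by rw [← hbdef]; ring
  have hval : deriv H 0 = deriv G 0 / (1 - (starRingEnd ℂ) b * b) := by
    rw [hHderiv.deriv, hsub, ← hbdef]
    have hv0' : (1:ℂ) - (starRingEnd ℂ) b * b ≠ 0 := hden 0 h0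
    rw [zero_mul, sub_zero, pow_two, mul_div_mul_right _ _ hv0']
  have hcb : (starRingEnd ℂ) b * b = (Complex.normSq b : ℂ) := by
    rw [mul_comm, Complex.mul_conj]
  have hnv : ‖(1:ℂ) - (starRingEnd ℂ) b * b‖ = 1 - ‖b‖ ^ 2 := by
    rw [hcb, norm_sq_eq']
    rw [show (1:ℂ) - (Complex.normSq b : ℂ) = ((1 - Complex.normSq b : ℝ) : ℂ) by push_cast; ring]
    rw [Complex.norm_real, Real.norm_of_nonneg (by linarith)]
  have hfin : ‖deriv G 0‖ = ‖deriv H 0‖ * (1 - ‖b‖ ^ 2) := by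
    rw [hval, norm_div, hnv, div_mul_cancel₀]
    have : (0:ℝ) < 1 - ‖b‖ ^ 2 := by nlinarith [norm_nonneg b]
    linarith [this]
  rw [hfin]
  have : (0:ℝ) < 1 - ‖b‖ ^ 2 := by nlinarith [norm_nonneg b]
  nlinarith [hschwarz, this]

private lemma normSq_pm' (w : ℂ) :
    Complex.normSq (1 - w) - Complex.normSq (1 + w) = -(4 * w.re) := by
  simp only [Complex.normSq_apply, Complex.sub_re, Complex.sub_im, Complex.add_re,
    Complex.add_im, Complex.one_re, Complex.one_im]
  ring

private lemma norm_sq_eq'' (z : ℂ) : ‖z‖ ^ 2 = Complex.normSq z := by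
  rw [Complex.sq_norm]

private lemma aux_div (a b : ℝ) (hb : b ≠ 0) : (1 - (a/b)^2) * b^2 = b^2 - a^2 := by
  field_simp

/-- derivative bound for maps into an open convex set, in terms of a point outside. -/
private lemma derivBound {Ω : Set ℂ} (hconv : Convex ℝ Ω) (hopen : IsOpen Ω)
    {φ : ℂ → ℂ} (hd : DifferentiableOn ℂ φ (ball 0 1))
    (hmap : Set.MapsTo φ (ball 0 1) Ω) {c : ℂ} (hc : c ∉ Ω) :
    ‖deriv φ 0‖ ≤ 2 * ‖φ 0 - c‖ := by
  have h0 : (0:ℂ) ∈ ball (0:ℂ) 1 := mem_ball_self one_pos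
  obtain ⟨l, hl⟩ := geometric_hahn_banach_open_point hconv hopen hc
  set α : ℂ := ⟨l 1, l Complex.I⟩ with hα
  have hleq : ∀ z : ℂ, l z = ((starRingEnd ℂ) α * z).re := by
    intro z
    have hz : z = z.re • (1:ℂ) + z.im • Complex.I := by
      simp [Complex.real_smul, Complex.re_add_im]
    rw [hz, map_add, map_smul, map_smul]
    simp [hα, Complex.mul_re, Complex.conj_re, Complex.conj_im]
    ring
  set ψ : ℂ → ℂ := fun z => (starRingEnd ℂ) α * (φ z - c) with hψ
  have hRe : ∀ z ∈ ball (0:ℂ) 1, (ψ z).re < 0 := by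
    intro z hz
    have := hl (φ z) (hmap hz)
    rw [hleq (φ z), hleq c] at this
    have : ((starRingEnd ℂ) α * (φ z - c)).re < 0 := by
      rw [mul_sub, Complex.sub_re]; linarith
    simpa [hψ] using this
  have hαne : α ≠ 0 := by
    intro h
    have := hRe 0 h0
    rw [hψ] at this
    simp [h] at this
  have hden : ∀ z ∈ ball (0:ℂ) 1, (1:ℂ) - ψ z ≠ 0 := by
    intro z hz h
    have h1 : (1 - ψ z).re = 0 := by rw [h]; simp
    have := hRe z hz
    rw [Complex.sub_re, Complex.one_re] at h1
    linarith
  have hkey : ∀ z ∈ ball (0:ℂ) 1, ‖1 + ψ z‖ < ‖1 - ψ z‖ := by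
    intro z hz
    have h2 : ‖1 + ψ z‖ ^ 2 < ‖1 - ψ z‖ ^ 2 := by
      rw [norm_sq_eq'', norm_sq_eq'']
      nlinarith [normSq_pm' (ψ z), hRe z hz]
    exact lt_of_pow_lt_pow_left₀ 2 (norm_nonneg _) h2
  set G : ℂ → ℂ := fun z => (1 + ψ z) / (1 - ψ z) with hG
  have hψd : DifferentiableOn ℂ ψ (ball 0 1) :=
    (differentiableOn_const _).mul (hd.sub (differentiableOn_const _))
  have hGd : DifferentiableOn ℂ G (ball 0 1) :=
    ((differentiableOn_const _).add hψd).div ((differentiableOn_const _).sub hψd) hden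
  have hGmap : Set.MapsTo G (ball 0 1) (ball 0 1) := by
    intro z hz
    rw [mem_ball, dist_zero_right, hG]
    have hpos : 0 < ‖(1:ℂ) - ψ z‖ := norm_pos_iff.2 (hden z hz)
    rw [norm_div, div_lt_one hpos]
    exact hkey z hz
  have hsp := schwarzPick0 hGd hGmap
  -- compute deriv G 0
  have hφd : HasDerivAt φ (deriv φ 0) 0 :=
    (hd.differentiableAt (isOpen_ball.mem_nhds h0)).hasDerivAt
  have hψd0 : HasDerivAt ψ ((starRingEnd ℂ) α * deriv φ 0) 0 :=
    (hφd.sub_const c).const_mul ((starRingEnd ℂ) α)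
  have hu : HasDerivAt (fun z => 1 + ψ z) ((starRingEnd ℂ) α * deriv φ 0) 0 := by
    simpa using hψd0.const_add 1
  have hv : HasDerivAt (fun z => 1 - ψ z) (-((starRingEnd ℂ) α * deriv φ 0)) 0 := by
    simpa using hψd0.const_sub 1
  have hv0 : (1:ℂ) - ψ 0 ≠ 0 := hden 0 h0
  have hGderiv : HasDerivAt G
      (((starRingEnd ℂ) α * deriv φ 0 * (1 - ψ 0) -
        (1 + ψ 0) * -((starRingEnd ℂ) α * deriv φ 0)) / (1 - ψ 0) ^ 2) 0 := hu.div hv hv0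
  have hval : deriv G 0 = 2 * ((starRingEnd ℂ) α * deriv φ 0) / (1 - ψ 0) ^ 2 := by
    rw [hGderiv.deriv]; ring
  -- assemble
  have hG0 : ‖G 0‖ = ‖1 + ψ 0‖ / ‖1 - ψ 0‖ := by rw [hG]; simp [norm_div]
  have hpos : 0 < ‖(1:ℂ) - ψ 0‖ := norm_pos_iff.2 hv0
  have hineq : 2 * ‖(starRingEnd ℂ) α * deriv φ 0‖ ≤ ‖1 - ψ 0‖^2 - ‖1 + ψ 0‖^2 := by
    have h1 : ‖deriv G 0‖ = 2 * ‖(starRingEnd ℂ) α * deriv φ 0‖ / ‖1 - ψ 0‖^2 := by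
      rw [hval, norm_div, norm_mul, norm_pow, Complex.norm_ofNat]
    rw [h1, hG0] at hsp
    rw [div_le_iff₀ (by positivity)] at hsp
    calc 2 * ‖(starRingEnd ℂ) α * deriv φ 0‖
        ≤ (1 - (‖1 + ψ 0‖ / ‖1 - ψ 0‖) ^ 2) * ‖1 - ψ 0‖ ^ 2 := hsp
      _ = ‖1 - ψ 0‖^2 - ‖1 + ψ 0‖^2 := aux_div _ _ (ne_of_gt hpos)
  have hre : ‖1 - ψ 0‖^2 - ‖1 + ψ 0‖^2 = -(4 * (ψ 0).re) := by
    rw [norm_sq_eq'', norm_sq_eq'']; exact normSq_pm' (ψ 0)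
  have habs : -(ψ 0).re ≤ ‖ψ 0‖ := by
    have := Complex.abs_re_le_norm (ψ 0)
    cases abs_le.1 this with
    | intro h1 h2 => linarith
  have hnα : ‖(starRingEnd ℂ) α‖ = ‖α‖ := RCLike.norm_conj α
  have hψ0 : ‖ψ 0‖ = ‖α‖ * ‖φ 0 - c‖ := by rw [hψ]; simp [norm_mul, hnα]
  have hfin : 2 * (‖α‖ * ‖deriv φ 0‖) ≤ 4 * (‖α‖ * ‖φ 0 - c‖) := by
    calc 2 * (‖α‖ * ‖deriv φ 0‖) = 2 * ‖(starRingEnd ℂ) α * deriv φ 0‖ := by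
          rw [norm_mul, hnα]
      _ ≤ ‖1 - ψ 0‖^2 - ‖1 + ψ 0‖^2 := hineq
      _ = -(4 * (ψ 0).re) := hre
      _ ≤ 4 * ‖ψ 0‖ := by linarith
      _ = 4 * (‖α‖ * ‖φ 0 - c‖) := by rw [hψ0]
  have hαpos : 0 < ‖α‖ := norm_pos_iff.2 hαne
  nlinarith [hfin, hαpos]

private lemma image_open_and_ne_univ {f : ℂ → ℂ} (hf : DifferentiableOn ℂ f (ball 0 1))
    (hinj : Set.InjOn f (ball 0 1)) :
    IsOpen (f '' ball 0 1) ∧ f '' ball 0 1 ≠ Set.univ := by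
  have han : AnalyticOnNhd ℂ f (ball 0 1) := hf.analyticOnNhd isOpen_ball
  have hhalf : (1/2 : ℂ) ∈ ball (0:ℂ) 1 := by
    simp [mem_ball, dist_eq_norm]
    norm_num
  have h0mem : (0:ℂ) ∈ ball (0:ℂ) 1 := mem_ball_self one_pos
  have key : ∀ x₀ ∈ ball (0:ℂ) 1, ¬ (∀ᶠ z in 𝓝 x₀, f z = f x₀) := by
    intro x₀ hx₀ hev
    have heq : Set.EqOn f (fun _ => f x₀) (ball 0 1) :=
      han.eqOn_of_preconnected_of_eventuallyEq analyticOnNhd_const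
        (convex_ball (0:ℂ) 1).isPreconnected hx₀ hev
    have h01 : (0:ℂ) = 1/2 := hinj h0mem hhalf (by rw [heq h0mem, heq hhalf])
    norm_num at h01
  have hnhds : ∀ x₀ ∈ ball (0:ℂ) 1, 𝓝 (f x₀) ≤ map f (𝓝 x₀) := fun x₀ h =>
    ((han x₀ h).eventually_constant_or_nhds_le_map_nhds).resolve_left (key x₀ h)
  have hopen : IsOpen (f '' ball 0 1) := by
    rw [isOpen_iff_mem_nhds]
    rintro y ⟨x, hx, rfl⟩
    exact hnhds x hx (image_mem_map (isOpen_ball.mem_nhds hx))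
  refine ⟨hopen, ?_⟩
  intro huniv
  set F := Function.invFunOn f (ball 0 1) with hFdef
  have hex : ∀ y : ℂ, ∃ x ∈ ball (0:ℂ) 1, f x = y := by
    intro y
    have : y ∈ f '' ball 0 1 := huniv ▸ Set.mem_univ y
    rcases this with ⟨x, hx, hxy⟩
    exact ⟨x, hx, hxy⟩
  have hFmem : ∀ y, F y ∈ ball (0:ℂ) 1 := fun y => Function.invFunOn_mem (hex y)
  have hFr : ∀ y, f (F y) = y := fun y => Function.invFunOn_eq (hex y)
  have hFl : ∀ x ∈ ball (0:ℂ) 1, F (f x) = x := fun x hx => hinj (hFmem (f x)) hx (hFr (f x))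
  have hFcont : ∀ y, ContinuousAt F y := by
    intro y
    rw [ContinuousAt, tendsto_def]
    intro V hV
    have hW : V ∩ ball 0 1 ∈ 𝓝 (F y) := inter_mem hV (isOpen_ball.mem_nhds (hFmem y))
    have h2 : f '' (V ∩ ball 0 1) ∈ 𝓝 y := by
      have h3 : f '' (V ∩ ball 0 1) ∈ map f (𝓝 (F y)) := image_mem_map hW
      have h4 := hnhds (F y) (hFmem y)
      rw [hFr y] at h4
      exact h4 h3
    refine mem_of_superset h2 ?_
    rintro u ⟨x, ⟨hxV, hxB⟩, rfl⟩
    show F (f x) ∈ V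
    rw [hFl x hxB]
    exact hxV
  have hDiffNe : ∀ y, deriv f (F y) ≠ 0 → DifferentiableAt ℂ F y := by
    intro y hne
    have hx := hFmem y
    obtain ⟨p, hp⟩ := han (F y) hx
    have hstrict : HasStrictDerivAt f (deriv f (F y)) (F y) := by
      have h1 := hp.hasStrictDerivAt
      rwa [← hp.deriv] at h1
    have hev : ∀ᶠ x in 𝓝 (F y), F (f x) = x :=
      eventually_of_mem (isOpen_ball.mem_nhds hx) (fun x hx' => hFl x hx')
    have hli := hstrict.to_local_left_inverse hne hev
    rw [hFr y] at hli
    exact (HasStrictDerivAt.hasDerivAt hli).differentiableAt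
  have hDiffAll : ∀ y, DifferentiableAt ℂ F y := by
    intro y
    by_cases hne : deriv f (F y) = 0
    swap
    · exact hDiffNe y hne
    have hx₀ := hFmem y
    have hdf : AnalyticOnNhd ℂ (deriv f) (ball 0 1) := han.deriv
    rcases (hdf (F y) hx₀).eventually_eq_zero_or_eventually_ne_zero with hcase | hcase
    · exfalso
      have h2 : {z | deriv f z = 0} ∩ ball 0 1 ∈ 𝓝 (F y) :=
        inter_mem hcase (isOpen_ball.mem_nhds hx₀)
      rcases Metric.mem_nhds_iff.1 h2 with ⟨ε, hε, hsub⟩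
      apply key (F y) hx₀
      have hconst : ∀ z ∈ ball (F y) ε, f z = f (F y) := by
        intro z hz
        apply (convex_ball (F y) ε).is_const_of_fderivWithin_eq_zero
          (hf.mono (fun w hw => (hsub hw).2)) ?_ hz (mem_ball_self hε)
        intro w hw
        have hdiff : DifferentiableAt ℂ f w := hf.differentiableAt
          (isOpen_ball.mem_nhds (hsub hw).2)
        have hzero : deriv f w = 0 := (hsub hw).1
        have hfd : HasFDerivAt f ((1 : ℂ →L[ℂ] ℂ).smulRight (deriv f w)) w :=
          hdiff.hasDerivAt.hasFDerivAt
        rw [fderivWithin_of_isOpen isOpen_ball hw, hfd.fderiv, hzero]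
        apply ContinuousLinearMap.ext
        intro v
        simp
      exact eventually_of_mem (Metric.ball_mem_nhds _ hε) hconst
    · have htend : Tendsto F (𝓝[≠] y) (𝓝[≠] (F y)) := by
        apply tendsto_nhdsWithin_of_tendsto_nhds_of_eventually_within
        · exact (hFcont y).tendsto.mono_left nhdsWithin_le_nhds
        · filter_upwards [self_mem_nhdsWithin] with u hu
          intro hFu
          apply hu
          have : f (F u) = f (F y) := by rw [hFu]
          rw [hFr, hFr] at this
          exact this
      have hev2 : ∀ᶠ u in 𝓝[≠] y, deriv f (F u) ≠ 0 := htend.eventually hcase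
      have hev3 : ∀ᶠ u in 𝓝[≠] y, DifferentiableAt ℂ F u := by
        filter_upwards [hev2] with u hu using hDiffNe u hu
      exact (Complex.analyticAt_of_differentiable_on_punctured_nhds_of_continuousAt
        hev3 (hFcont y)).differentiableAt
  have hbd : IsBounded (range F) :=
    (isBounded_ball (x := (0:ℂ)) (r := 1)).subset (range_subset_iff.2 hFmem)
  obtain ⟨C, hC⟩ := Differentiable.exists_eq_const_of_bounded (fun y => hDiffAll y) hbd
  have h0 : (0:ℂ) = 1 := by
    have e0 := hFr 0
    have e1 := hFr 1
    rw [hC] at e0 e1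
    simp only [Function.const_apply] at e0 e1
    rw [← e0, ← e1]
  norm_num at h0

private lemma coeffBound {Ω : Set ℂ} (hconv : Convex ℝ Ω) (hopen : IsOpen Ω)
    {g : ℂ → ℂ} {b : ℕ → ℂ}
    (hsum : ∀ z ∈ ball (0:ℂ) 1, HasSum (fun n : ℕ => b n * z ^ n) (g z))
    (hmap : Set.MapsTo g (ball 0 1) Ω)
    {c : ℂ} (hc : c ∉ Ω) (k : ℕ) (hk : 1 ≤ k) :
    ‖b k‖ ≤ 2 * ‖b 0 - c‖ := by
  have hk0 : (k:ℝ) ≠ 0 := Nat.cast_ne_zero.2 (by omega)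
  set p := FormalMultilinearSeries.ofScalars ℂ (fun n => b (n * k)) with hp
  -- radius at least 1
  have hrad : 1 ≤ p.radius := by
    apply ENNReal.le_of_forall_nnreal_lt
    intro ρ hρ
    rcases eq_or_ne ρ 0 with rfl | hρ0
    · simp
    have hρ1 : (ρ : ℝ) < 1 := by exact_mod_cast hρ
    have hρpos : (0:ℝ) < ρ := by positivity
    set σ : ℝ := (ρ : ℝ) ^ ((1:ℝ)/k) with hσ
    have hσpos : 0 < σ := Real.rpow_pos_of_pos hρpos _
    have hσ1 : σ < 1 := Real.rpow_lt_one hρpos.le hρ1 (by positivity)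
    have hσk : σ ^ k = (ρ:ℝ) := by
      rw [hσ, ← Real.rpow_natCast (_ ^ _) k, ← Real.rpow_mul hρpos.le]
      rw [one_div, inv_mul_cancel₀ hk0, Real.rpow_one]
    have hmem : (σ : ℂ) ∈ ball (0:ℂ) 1 := by
      simp only [mem_ball, dist_zero_right, Complex.norm_real, Real.norm_eq_abs,
        abs_of_pos hσpos]
      exact hσ1
    have hsummable := (hsum _ hmem).summable
    have htend : Tendsto (fun n => ‖b n * (σ:ℂ) ^ n‖) atTop (nhds 0) := by
      simpa using hsummable.tendsto_atTop_zero.norm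
    obtain ⟨C, hC⟩ := htend.bddAbove_range
    apply p.le_radius_of_bound C
    intro n
    have h1 : ‖p n‖ = ‖b (n * k)‖ := FormalMultilinearSeries.ofScalars_norm _ _ _
    have h2 : ‖b (n * k) * (σ:ℂ) ^ (n * k)‖ ≤ C := hC ⟨n * k, rfl⟩
    rw [h1]
    calc ‖b (n * k)‖ * (ρ:ℝ) ^ n = ‖b (n * k) * (σ:ℂ) ^ (n * k)‖ := by
          rw [norm_mul, norm_pow, Complex.norm_real, Real.norm_eq_abs, abs_of_pos hσpos,
            ← hσk, ← pow_mul, mul_comm k n]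
      _ ≤ C := h2
  have hradpos : 0 < p.radius := lt_of_lt_of_le one_pos hrad
  have hball : ball (0:ℂ) 1 ⊆ Metric.eball 0 p.radius := by
    intro z hz
    rw [Metric.mem_eball, edist_zero_right]
    refine lt_of_lt_of_le ?_ hrad
    rw [← ENNReal.coe_one, enorm_eq_nnnorm, ENNReal.coe_lt_coe, ← NNReal.coe_lt_coe]
    simpa [mem_ball, dist_zero_right] using hz
  have hφsum : ∀ u ∈ ball (0:ℂ) 1, HasSum (fun n : ℕ => b (n * k) * u ^ n) (p.sum u) := by
    intro u hu
    have h1 := p.hasSum (hball hu)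
    have h2 : (fun n : ℕ => p n fun _ => u) = fun n : ℕ => b (n * k) * u ^ n := by
      funext n
      rw [hp, FormalMultilinearSeries.ofScalars_apply_eq, smul_eq_mul]
    rwa [h2] at h1
  have hfp := p.hasFPowerSeriesOnBall hradpos
  -- p.sum maps the ball into Ω
  have hφmap : Set.MapsTo p.sum (ball 0 1) Ω := by
    intro u hu
    obtain ⟨ζ, hζ⟩ := IsAlgClosed.exists_pow_nat_eq u (show 0 < k by omega)
    have hu1 : ‖u‖ < 1 := by simpa [mem_ball, dist_zero_right] using hu
    have hζ1 : ‖ζ‖ < 1 := by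
      by_contra h
      push_neg at h
      have h1 : (1:ℝ) ≤ ‖ζ‖ ^ k := one_le_pow₀ h
      rw [← hζ, norm_pow] at hu1
      linarith
    set ε : ℂ := Complex.exp (2 * Real.pi * Complex.I / k) with hε
    have hprim : IsPrimitiveRoot ε k := Complex.isPrimitiveRoot_exp k (by omega)
    have hεnorm : ‖ε‖ = 1 := by
      have h2 : ‖ε‖ ^ k = 1 := by rw [← norm_pow, hprim.pow_eq_one, norm_one]
      rcases lt_trichotomy ‖ε‖ 1 with h | h | h
      · exfalso
        have := pow_lt_one₀ (norm_nonneg ε) h (n := k) (by omega)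
        linarith
      · exact h
      · exfalso
        have := one_lt_pow₀ h (n := k) (by omega)
        linarith
    have hζj : ∀ j : ℕ, ε ^ j * ζ ∈ ball (0:ℂ) 1 := by
      intro j
      simp only [mem_ball, dist_zero_right, norm_mul, norm_pow, hεnorm, one_pow, one_mul]
      exact hζ1
    have havg : ∀ j ∈ Finset.range k,
        HasSum (fun n : ℕ => (1/(k:ℝ)) • (b n * (ε ^ j * ζ) ^ n)) ((1/(k:ℝ)) • g (ε ^ j * ζ)) :=
      fun j _ => (hsum _ (hζj j)).const_smul _
    have hsum2 : HasSum (fun n : ℕ => ∑ j ∈ Finset.range k, (1/(k:ℝ)) • (b n * (ε ^ j * ζ) ^ n))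
        (∑ j ∈ Finset.range k, (1/(k:ℝ)) • g (ε ^ j * ζ)) := hasSum_sum havg
    set S := ∑ j ∈ Finset.range k, (1/(k:ℝ)) • g (ε ^ j * ζ) with hS
    have hSmem : S ∈ Ω := by
      apply hconv.sum_mem
      · intro i _
        positivity
      · rw [Finset.sum_const, Finset.card_range, nsmul_eq_mul]
        field_simp
      · intro i _
        exact hmap (hζj i)
    have hterm : (fun n : ℕ => ∑ j ∈ Finset.range k, (1/(k:ℝ)) • (b n * (ε ^ j * ζ) ^ n))
        = fun n : ℕ => if k ∣ n then b n * ζ ^ n else 0 := by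
      funext n
      have hfac : ∀ j : ℕ, (ε ^ j * ζ) ^ n = (ε ^ n) ^ j * ζ ^ n := by
        intro j
        rw [mul_pow, ← pow_mul, ← pow_mul, mul_comm j n]
      simp only [hfac]
      have hpull : ∑ j ∈ Finset.range k, (1/(k:ℝ)) • (b n * ((ε ^ n) ^ j * ζ ^ n))
          = (1/(k:ℝ)) • ((b n * ζ ^ n) * ∑ j ∈ Finset.range k, (ε ^ n) ^ j) := by
        rw [← Finset.smul_sum]
        congr 1
        rw [Finset.mul_sum]
        apply Finset.sum_congr rfl
        intro j _
        ring
      rw [hpull]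
      by_cases hdvd : k ∣ n
      · have hεn : ε ^ n = 1 := (hprim.pow_eq_one_iff_dvd n).2 hdvd
        rw [if_pos hdvd, hεn]
        simp only [one_pow, Finset.sum_const, Finset.card_range, nsmul_eq_mul, mul_one]
        rw [Complex.real_smul]
        have hkc : (k:ℂ) ≠ 0 := Nat.cast_ne_zero.2 (by omega)
        push_cast
        field_simp
      · have hεn : ε ^ n ≠ 1 := fun h => hdvd ((hprim.pow_eq_one_iff_dvd n).1 h)
        rw [if_neg hdvd]
        have hgeom : ∑ j ∈ Finset.range k, (ε ^ n) ^ j = 0 := by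
          rw [geom_sum_eq hεn]
          have h5 : (ε ^ n) ^ k = 1 := by
            rw [← pow_mul, mul_comm n k, pow_mul, hprim.pow_eq_one, one_pow]
          rw [h5]
          simp
        rw [hgeom, mul_zero, smul_zero]
    rw [hterm] at hsum2
    have hinj2 : Function.Injective (fun m : ℕ => m * k) := fun a b h =>
      Nat.eq_of_mul_eq_mul_right (by omega) h
    have hvanish : ∀ n ∉ Set.range (fun m : ℕ => m * k),
        (if k ∣ n then b n * ζ ^ n else 0) = 0 := by
      intro n hn
      rw [if_neg]
      rintro ⟨m, rfl⟩
      exact hn ⟨m, (mul_comm m k)⟩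
    have hre := (Function.Injective.hasSum_iff hinj2 hvanish).2 hsum2
    have hre2 : HasSum (fun m : ℕ => b (m * k) * u ^ m) S := by
      refine HasSum.congr_fun hre ?_
      intro m
      show b (m * k) * u ^ m = (if k ∣ m * k then b (m * k) * ζ ^ (m * k) else 0)
      rw [if_pos ⟨m, mul_comm m k⟩, ← hζ, ← pow_mul, mul_comm k m]
    have huS : p.sum u = S := (hφsum u hu).unique hre2
    rw [huS]
    exact hSmem
  have hφd : DifferentiableOn ℂ p.sum (ball 0 1) := hfp.differentiableOn.mono hball
  have hφ0 : p.sum 0 = b 0 := by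
    have h1 := hφsum 0 (mem_ball_self one_pos)
    have h2 : HasSum (fun n : ℕ => b (n * k) * (0:ℂ) ^ n) (b (0 * k) * (0:ℂ) ^ 0) :=
      hasSum_single 0 (by intro n hn; simp [zero_pow hn])
    have h3 := h1.unique h2
    simpa using h3
  have hd0 : deriv p.sum 0 = b k := by
    have h1 := hfp.hasFPowerSeriesAt.deriv
    rw [h1, hp, FormalMultilinearSeries.ofScalars_apply_eq]
    simp
  have hfinal := derivBound hconv hopen hφd hφmap hc
  rwa [hd0, hφ0] at hfinal

theorem generalized_bohr_rogosinski_convex_subordination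
    (lam : ℕ → ℝ → ℝ) (m : ℕ) (f g w : ℂ → ℂ) (b : ℕ → ℂ) (r : ℝ)
    (hlcont : ∀ k, 1 ≤ k → ContinuousOn (lam k) (Set.Ico (0:ℝ) 1))
    (hlnonneg : ∀ k, 1 ≤ k → ∀ t ∈ Set.Ico (0:ℝ) 1, 0 ≤ lam k t)
    (hlconv : TendstoLocallyUniformlyOn
      (fun N : ℕ => fun t : ℝ => ∑ k ∈ Finset.range N, lam (k + 1) t)
      (fun t : ℝ => ∑' k : ℕ, lam (k + 1) t) atTop (Set.Ico (0:ℝ) 1))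
    (hm : 0 < m)
    (hf : DifferentiableOn ℂ f (ball (0:ℂ) 1))
    (hinj : Set.InjOn f (ball (0:ℂ) 1))
    (hconvex : Convex ℝ (f '' ball (0:ℂ) 1))
    (hg : DifferentiableOn ℂ g (ball (0:ℂ) 1))
    (hsum : ∀ z ∈ ball (0:ℂ) 1, HasSum (fun k : ℕ => b k * z ^ k) (g z))
    (hw : DifferentiableOn ℂ w (ball (0:ℂ) 1))
    (hwmaps : Set.MapsTo w (ball (0:ℂ) 1) (ball (0:ℂ) 1))
    (hw0 : w 0 = 0)
    (hsub : ∀ z ∈ ball (0:ℂ) 1, g z = f (w z))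
    (hr : r ∈ Set.Ico (0:ℝ) 1)
    (hcond : (∑' k : ℕ, lam (k + 1) r) + r ^ m / (1 - r ^ m) ≤ 1 / 2) :
    ∀ z : ℂ, ‖z‖ = r →
      ‖g (z ^ m)‖ + ∑' k : ℕ, ‖b (k + 1)‖ * lam (k + 1) r
        ≤ ‖f 0‖ + infDist (f 0) (frontier (f '' ball (0:ℂ) 1)) := by
  intro z hz
  obtain ⟨hΩopen, hΩne⟩ := image_open_and_ne_univ hf hinj
  set Ω := f '' ball (0:ℂ) 1 with hΩ
  have h0mem : (0:ℂ) ∈ ball (0:ℂ) 1 := mem_ball_self one_pos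
  have hΩnonempty : Ω.Nonempty := ⟨f 0, 0, h0mem, rfl⟩
  have hfront : (frontier Ω).Nonempty := by
    rw [nonempty_iff_ne_empty]
    intro h
    rcases frontier_eq_empty_iff.mp h with h1 | h1
    · exact hΩnonempty.ne_empty h1
    · exact hΩne h1
  set d := infDist (f 0) (frontier Ω) with hd
  have hd0 : 0 ≤ d := infDist_nonneg
  have hgmap : Set.MapsTo g (ball 0 1) Ω := by
    intro x hx
    rw [hsub x hx]
    exact ⟨w x, hwmaps hx, rfl⟩
  have hb0 : b 0 = f 0 := by
    have h1 := hsum 0 h0mem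
    have h2 : HasSum (fun n : ℕ => b n * (0:ℂ) ^ n) (b 0 * (0:ℂ) ^ 0) :=
      hasSum_single 0 (by intro n hn; simp [zero_pow hn])
    have h3 := h2.unique h1
    rw [hsub 0 h0mem, hw0] at h3
    simpa using h3
  have hbk : ∀ k : ℕ, 1 ≤ k → ‖b k‖ ≤ 2 * d := by
    intro k hk1
    have h2 : ∀ c ∈ frontier Ω, ‖b k‖ / 2 ≤ dist (f 0) c := by
      intro c hcf
      have hcnot : c ∉ Ω := by
        rw [hΩopen.frontier_eq] at hcf
        exact hcf.2
      have h3 := coeffBound hconvex hΩopen hsum hgmap hcnot k hk1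
      rw [hb0] at h3
      rw [dist_eq_norm]
      linarith
    have h4 : ‖b k‖ / 2 ≤ infDist (f 0) (frontier Ω) := by
      by_contra h5
      push_neg at h5
      rcases (infDist_lt_iff hfront).1 h5 with ⟨c, hcf, hlt⟩
      exact absurd (h2 c hcf) (by linarith)
    linarith
  have hr0 : 0 ≤ r := hr.1
  have hr1 : r < 1 := hr.2
  set q := r ^ m with hq
  have hq0 : 0 ≤ q := pow_nonneg hr0 m
  have hq1 : q < 1 := pow_lt_one₀ hr0 hr1 (by omega)
  have hznorm : ‖z‖ = r := by rw [hz]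
  have hzm : z ^ m ∈ ball (0:ℂ) 1 := by
    simp only [mem_ball, dist_zero_right, norm_pow, hznorm]
    exact hq1
  have hvnorm : ‖z ^ m‖ = q := by rw [norm_pow, hznorm]
  -- growth bound
  have hSv := hsum (z ^ m) hzm
  have htail : HasSum (fun n : ℕ => b (n + 1) * (z ^ m) ^ (n + 1)) (g (z ^ m) - b 0) := by
    refine (hasSum_nat_add_iff (f := fun n : ℕ => b n * (z ^ m) ^ n) 1).2 ?_
    simpa using hSv
  have hmajor : Summable (fun n : ℕ => 2 * d * q ^ (n + 1)) := by
    have h5 : Summable (fun n : ℕ => (2 * d * q) * q ^ n) :=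
      (summable_geometric_of_lt_one hq0 hq1).mul_left _
    refine h5.congr fun n => ?_
    ring
  have hbound : ∀ n : ℕ, ‖b (n + 1) * (z ^ m) ^ (n + 1)‖ ≤ 2 * d * q ^ (n + 1) := by
    intro n
    rw [norm_mul, norm_pow, hvnorm]
    exact mul_le_mul_of_nonneg_right (hbk (n + 1) (by omega)) (pow_nonneg hq0 _)
  have hnormsummable : Summable (fun n : ℕ => ‖b (n + 1) * (z ^ m) ^ (n + 1)‖) :=
    Summable.of_nonneg_of_le (fun n => norm_nonneg _) hbound hmajor
  have htailnorm : ‖g (z ^ m) - b 0‖ ≤ 2 * d * (q / (1 - q)) := by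
    have h6 : ‖g (z ^ m) - b 0‖ ≤ ∑' n : ℕ, ‖b (n + 1) * (z ^ m) ^ (n + 1)‖ := by
      rw [← htail.tsum_eq]
      exact norm_tsum_le_tsum_norm hnormsummable
    have h7 : (∑' n : ℕ, ‖b (n + 1) * (z ^ m) ^ (n + 1)‖) ≤ ∑' n : ℕ, 2 * d * q ^ (n + 1) :=
      Summable.tsum_le_tsum hbound hnormsummable hmajor
    have h8 : (∑' n : ℕ, 2 * d * q ^ (n + 1)) = 2 * d * (q / (1 - q)) := by
      have h9 : (fun n : ℕ => 2 * d * q ^ (n + 1)) = fun n : ℕ => (2 * d * q) * q ^ n := by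
        funext n
        ring
      rw [h9, tsum_mul_left, tsum_geometric_of_lt_one hq0 hq1]
      rw [div_eq_mul_inv]
      ring
    linarith
  have hgrow : ‖g (z ^ m)‖ ≤ ‖f 0‖ + 2 * d * (q / (1 - q)) := by
    calc ‖g (z ^ m)‖ = ‖b 0 + (g (z ^ m) - b 0)‖ := by congr 1; ring
      _ ≤ ‖b 0‖ + ‖g (z ^ m) - b 0‖ := norm_add_le _ _
      _ ≤ ‖f 0‖ + 2 * d * (q / (1 - q)) := by rw [← hb0]; linarith
  -- lambda sums
  set L := ∑' k : ℕ, lam (k + 1) r with hL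
  have hlamnn : ∀ k : ℕ, 0 ≤ lam (k + 1) r := fun k => hlnonneg (k + 1) (by omega) r hr
  have htendlam := hlconv.tendsto_at hr
  have hmono : Monotone (fun N : ℕ => ∑ k ∈ Finset.range N, lam (k + 1) r) := by
    intro a c hac
    exact Finset.sum_le_sum_of_subset_of_nonneg (Finset.range_subset_range.2 hac)
      (fun i _ _ => hlamnn i)
  have hpartial : ∀ N, (∑ k ∈ Finset.range N, lam (k + 1) r) ≤ L :=
    fun N => hmono.ge_of_tendsto htendlam N
  have hlamsummable : Summable (fun k : ℕ => lam (k + 1) r) :=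
    summable_of_sum_range_le hlamnn hpartial
  have hL0 : 0 ≤ L := tsum_nonneg hlamnn
  have hmajor2 : Summable (fun k : ℕ => 2 * d * lam (k + 1) r) := hlamsummable.mul_left _
  have hbound2 : ∀ k : ℕ, ‖b (k + 1)‖ * lam (k + 1) r ≤ 2 * d * lam (k + 1) r :=
    fun k => mul_le_mul_of_nonneg_right (hbk (k + 1) (by omega)) (hlamnn k)
  have hprodsummable : Summable (fun k : ℕ => ‖b (k + 1)‖ * lam (k + 1) r) :=
    Summable.of_nonneg_of_le (fun k => mul_nonneg (norm_nonneg _) (hlamnn k)) hbound2 hmajor2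
  have hprodle : (∑' k : ℕ, ‖b (k + 1)‖ * lam (k + 1) r) ≤ 2 * d * L := by
    calc (∑' k : ℕ, ‖b (k + 1)‖ * lam (k + 1) r)
        ≤ ∑' k : ℕ, 2 * d * lam (k + 1) r := Summable.tsum_le_tsum hbound2 hprodsummable hmajor2
      _ = 2 * d * L := tsum_mul_left
  have habs : (∑' k : ℕ, ‖b (k + 1)‖ * lam (k + 1) r)
      = ∑' k : ℕ, ‖b (k + 1)‖ * lam (k + 1) r := by
    rfl
  rw [habs]
  have hq2 : 0 ≤ q / (1 - q) := div_nonneg hq0 (by linarith)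
  have hcond' : L + q / (1 - q) ≤ 1 / 2 := hcond
  nlinarith [hgrow, hprodle, hd0, hq2, hL0]
end
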